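/- arXiv:math/0406134 — 5 statements merged into one kernel-verified Lean document; each statement's English description precedes it below -/
import Mathlib

section
/- Let N ≥ 2 be an integer, let a, b > 0 be real numbers, and let p be a real number with p > 2 + √(5N)·a/b. Then on the set {x ∈ ℝ^N : x_l ≥ 0 for all l and Σ_{l=1}^N x_l² = b²}, the function σ_p(x) = Σ_{l=1}^N (a + x_l)^p attains its minimum exactly at the point with x_l = b/√N for all l; i.e., σ_p(x) > N(a + b/√N)^p for every other point x of the constraint set. -/
open Matrix
open scoped Classical

noncomputable section

namespace FramesErasures

/-- The constant `c_{n,k} = sqrt(k(n-k)/(n^2(n-1)))`. -/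
noncomputable def c (n k : ℕ) : ℝ :=
  Real.sqrt ((k : ℝ) * ((n : ℝ) - k) / ((n : ℝ) ^ 2 * ((n : ℝ) - 1)))

/-- Operator norm (ℓ²→ℓ²) of a square real matrix. -/
noncomputable def opNorm {k : ℕ} (A : Matrix (Fin k) (Fin k) ℝ) : ℝ :=
  ‖Matrix.toEuclideanCLM (𝕜 := ℝ) A‖

/-- The diagonal 0-1 matrix with 1's exactly at the positions in `S`. -/
def diagS {n : ℕ} (S : Finset (Fin n)) : Matrix (Fin n) (Fin n) ℝ :=
  Matrix.diagonal fun i => if i ∈ S then 1 else 0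

/-- `e_m^∞(F)`: the maximal norm of an error operator for `m` erasures. -/
noncomputable def errInf {n k : ℕ} (V : Matrix (Fin n) (Fin k) ℝ) (m : ℕ) : ℝ :=
  sSup {x : ℝ | ∃ S : Finset (Fin n), S.card = m ∧ x = opNorm (Vᵀ * diagS S * V)}

/-- `e_m^p(F)`: the ℓᵖ-average of the norms of the error operators for `m` erasures. -/
noncomputable def errP {n k : ℕ} (V : Matrix (Fin n) (Fin k) ℝ) (m : ℕ) (p : ℝ) : ℝ :=
  ((n.choose m : ℝ)⁻¹ *
      ∑ S ∈ Finset.univ.filter fun S : Finset (Fin n) => S.card = m,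
        opNorm (Vᵀ * diagS S * V) ^ p) ^ (1 / p)

/-- A Parseval frame is uniform if all diagonal Grammian entries equal `k/n`. -/
def Uniform (n k : ℕ) (V : Matrix (Fin n) (Fin k) ℝ) : Prop :=
  ∀ j, (V * Vᵀ) j j = (k : ℝ) / n

/-- 2-uniformity, via the equiangularity characterization. -/
def TwoUniform (n k : ℕ) (V : Matrix (Fin n) (Fin k) ℝ) : Prop :=
  Uniform n k V ∧ ∀ i j, i ≠ j → |(V * Vᵀ) i j| = c n k

/-- The `n×n` all-ones matrix. -/
def Jmat (n : ℕ) : Matrix (Fin n) (Fin n) ℝ :=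
  Matrix.of fun _ _ => 1

/-- A real 2-uniform `(n,k)`-frame, given by its analysis operator and signature matrix. -/
structure TwoUniformFrame (n k : ℕ) where
  V : Matrix (Fin n) (Fin k) ℝ
  Q : Matrix (Fin n) (Fin n) ℝ
  parseval : Vᵀ * V = 1
  symm : Qᵀ = Q
  diag : ∀ i, Q i i = 0
  offdiag : ∀ i j, i ≠ j → Q i j = 1 ∨ Q i j = -1
  gram : V * Vᵀ = ((k : ℝ) / n) • (1 : Matrix (Fin n) (Fin n) ℝ) + c n k • Q

/-- The graph associated with a 2-uniform frame: `i ≠ j` adjacent iff `Q i j = -1`. -/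
def frameGraph {n k : ℕ} (F : TwoUniformFrame n k) : SimpleGraph (Fin n) where
  Adj i j := i ≠ j ∧ F.Q i j = -1
  symm := by
    constructor
    intro i j h
    refine ⟨h.1.symm, ?_⟩
    have h2 : F.Q i j = F.Q j i := by
      have := congrFun (congrFun F.symm j) i
      simpa [Matrix.transpose_apply] using this
    rw [← h2]
    exact h.2
  loopless := ⟨fun i h => h.1 rfl⟩

/-- A graph is complete bipartite (with one part possibly empty). -/
def IsCompleteBipartite {α : Type*} (G : SimpleGraph α) : Prop :=
  ∃ A : Set α, ∀ i j, G.Adj i j ↔ ((i ∈ A) ↔ (j ∉ A))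

/-- `G` has an induced complete bipartite subgraph on `m` vertices. -/
def HasInducedCompleteBipartite {n : ℕ} (G : SimpleGraph (Fin n)) (m : ℕ) : Prop :=
  ∃ S : Finset (Fin n), S.card = m ∧
    IsCompleteBipartite (G.induce (S : Set (Fin n)))

/-- The Seidel adjacency matrix of a graph. -/
noncomputable def seidel {α : Type*} [DecidableEq α] (G : SimpleGraph α) : Matrix α α ℝ :=
  Matrix.of fun i j => if i = j then 0 else if G.Adj i j then -1 else 1

/-- Switching equivalence of graphs: Seidel matrices conjugate by a product of a permutation
and a `±1` diagonal matrix. -/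
def SwitchingEquivalent {α : Type*} [DecidableEq α] (G H : SimpleGraph α) : Prop :=
  ∃ (σ : Equiv.Perm α) (ε : α → ℝ), (∀ i, ε i = 1 ∨ ε i = -1) ∧
    ∀ i j, seidel H i j = ε i * ε j * seidel G (σ i) (σ j)

/-- `G ∈ 𝒢_m^(s)`: the minimal number of edges in the switching class of `G` equals `s`. -/
def MinSwitchEdges {α : Type*} [DecidableEq α] (G : SimpleGraph α) (s : ℕ) : Prop :=
  IsLeast {t : ℕ | ∃ H : SimpleGraph α, SwitchingEquivalent G H ∧ H.edgeSet.ncard = t} s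

/-- `lam` is the largest eigenvalue of the real matrix `A`. -/
def IsMaxEigenvalue {m : ℕ} (A : Matrix (Fin m) (Fin m) ℝ) (lam : ℝ) : Prop :=
  (∃ v : Fin m → ℝ, v ≠ 0 ∧ A.mulVec v = lam • v) ∧
  ∀ μ : ℝ, (∃ v : Fin m → ℝ, v ≠ 0 ∧ A.mulVec v = μ • v) → μ ≤ lam

/-- A 2-uniform frame is 3-uniform if the error norm is the same for all triple erasures. -/
def ThreeUniform {n k : ℕ} (F : TwoUniformFrame n k) : Prop :=
  ∀ S T : Finset (Fin n), S.card = 3 → T.card = 3 →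
    opNorm (F.Vᵀ * diagS S * F.V) = opNorm (F.Vᵀ * diagS T * F.V)

private lemma key_ineq (a s₀ p : ℝ) (ha : 0 < a) (hs₀ : 0 < s₀) (hp2 : 2 < p)
    (hgap : 2 * a < (p - 2) * s₀) :
    ∀ s : ℝ, 0 ≤ s → s ≠ s₀ →
      (a + s₀) ^ p + (p * (a + s₀) ^ (p - 1) / (2 * s₀)) * (s ^ 2 - s₀ ^ 2) < (a + s) ^ p := by
  intro s hs hne
  have has₀ : 0 < a + s₀ := by linarith
  set C : ℝ := p * (a + s₀) ^ (p - 1) / (2 * s₀) with hC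
  set h : ℝ → ℝ := fun t => (a + t) ^ p - C * t ^ 2 with hh
  set h₁ : ℝ → ℝ := fun t => p * (a + t) ^ (p - 1) - 2 * C * t with hh₁
  set h₂ : ℝ → ℝ := fun t => p * (p - 1) * (a + t) ^ (p - 2) - 2 * C with hh₂
  have hppos : 0 < p := by linarith
  have hD : ∀ t : ℝ, 0 < a + t → HasDerivAt h (h₁ t) t := by
    intro t ht
    have d1 : HasDerivAt (fun u : ℝ => (a + u) ^ p) (p * (a + t) ^ (p - 1)) t := by
      have := HasDerivAt.rpow_const (p := p) (by simpa using (hasDerivAt_id t).const_add a : HasDerivAt (fun u : ℝ => a + u) 1 t) (Or.inl (ne_of_gt ht))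
      simpa using this
    have d2 : HasDerivAt (fun u : ℝ => C * u ^ 2) (C * (2 * t ^ 1)) t :=
      (hasDerivAt_pow 2 t).const_mul C
    have := d1.sub d2
    refine this.congr_deriv ?_
    simp [hh₁]; ring
  have hD₁ : ∀ t : ℝ, 0 < a + t → HasDerivAt h₁ (h₂ t) t := by
    intro t ht
    have d1 : HasDerivAt (fun u : ℝ => p * (a + u) ^ (p - 1)) (p * ((p - 1) * (a + t) ^ (p - 2))) t := by
      have := HasDerivAt.rpow_const (p := p - 1) (by simpa using (hasDerivAt_id t).const_add a : HasDerivAt (fun u : ℝ => a + u) 1 t) (Or.inl (ne_of_gt ht))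
      have := this.const_mul p
      refine this.congr_deriv ?_
      rw [show p - 1 - 1 = p - 2 by ring]; ring
    have d2 : HasDerivAt (fun u : ℝ => 2 * C * u) (2 * C) t := by
      simpa using (hasDerivAt_id t).const_mul (2 * C)
    have := d1.sub d2
    refine this.congr_deriv ?_
    simp [hh₂]; ring
  have hD₂ : ∀ t : ℝ, 0 < a + t →
      HasDerivAt h₂ (p * (p - 1) * ((p - 2) * (a + t) ^ (p - 3))) t := by
    intro t ht
    have d1 : HasDerivAt (fun u : ℝ => (a + u) ^ (p - 2)) ((p - 2) * (a + t) ^ (p - 3)) t := by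
      have := HasDerivAt.rpow_const (p := p - 2) (by simpa using (hasDerivAt_id t).const_add a : HasDerivAt (fun u : ℝ => a + u) 1 t) (Or.inl (ne_of_gt ht))
      convert this using 1
      rw [show p - 2 - 1 = p - 3 by ring]; ring
    have := (d1.const_mul (p * (p - 1))).sub_const (2 * C)
    convert this using 1
  have h₁s₀ : h₁ s₀ = 0 := by
    simp only [hh₁, hC]
    field_simp
    ring
  have hsplit : (a + s₀) ^ (p - 1) = (a + s₀) ^ (p - 2) * (a + s₀) := by
    rw [show p - 1 = (p - 2) + 1 by ring, Real.rpow_add_one (ne_of_gt has₀)]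
  have hsplitp : (a + s₀) ^ p = (a + s₀) ^ (p - 1) * (a + s₀) := by
    rw [show p = (p - 1) + 1 by ring, Real.rpow_add_one (ne_of_gt has₀)]
    ring_nf
  have hrp2pos : 0 < (a + s₀) ^ (p - 2) := Real.rpow_pos_of_pos has₀ _
  have hrp1pos : 0 < (a + s₀) ^ (p - 1) := Real.rpow_pos_of_pos has₀ _
  have h₂s₀ : 0 < h₂ s₀ := by
    have heq : h₂ s₀ = p * (a + s₀) ^ (p - 2) * ((p - 2) * s₀ - a) / s₀ := by
      simp only [hh₂, hC, hsplit]
      field_simp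
      ring
    rw [heq]
    apply div_pos _ hs₀
    have : 0 < (p - 2) * s₀ - a := by linarith
    positivity
  have h0gt : h s₀ < h 0 := by
    have h0eq : h 0 = a ^ p := by simp [hh]
    have hseq : h s₀ = (a + s₀) ^ (p - 1) * (a - (p - 2) * s₀ / 2) := by
      simp only [hh, hC, hsplitp]
      field_simp
      ring
    have h1 : (a + s₀) ^ (p - 1) * (a - (p - 2) * s₀ / 2) < 0 :=
      mul_neg_of_pos_of_neg hrp1pos (by linarith)
    have h2 : (0:ℝ) < a ^ p := Real.rpow_pos_of_pos ha p
    rw [h0eq, hseq]; linarith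
  suffices hgoal : h s₀ < h s by
    simp only [hh] at hgoal; linarith
  rcases lt_or_gt_of_ne hne with hlt | hgt
  · -- s < s₀
    rcases eq_or_lt_of_le hs with hs0 | hspos
    · rw [← hs0]; exact h0gt
    · by_cases hB : ∀ r ∈ Set.Ioo (0:ℝ) s, 0 < h₁ r
      · have hmono : StrictMonoOn h (Set.Icc 0 s) := by
          apply strictMonoOn_of_deriv_pos (convex_Icc 0 s)
          · intro t ht
            exact ((hD t (by have := ht.1; linarith)).continuousAt).continuousWithinAt
          · intro t ht
            rw [interior_Icc] at ht
            rw [(hD t (by have := ht.1; linarith)).deriv]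
            exact hB t ht
        have : h 0 < h s := hmono ⟨le_rfl, hs⟩ ⟨hs, le_rfl⟩ hspos
        linarith
      · push_neg at hB
        obtain ⟨r₀, hr₀mem, hr₀⟩ := hB
        have hr₀s₀ : r₀ < s₀ := lt_trans hr₀mem.2 hlt
        have hconv : StrictConvexOn ℝ (Set.Icc 0 s₀) h₁ := by
          apply StrictMonoOn.strictConvexOn_of_deriv (convex_Icc 0 s₀)
          · intro t ht
            exact ((hD₁ t (by have := ht.1; linarith)).continuousAt).continuousWithinAt
          · rw [interior_Icc]
            have hm : StrictMonoOn h₂ (Set.Ioo 0 s₀) := by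
              apply strictMonoOn_of_deriv_pos (convex_Ioo 0 s₀)
              · intro t ht
                exact ((hD₂ t (by have := ht.1; linarith)).continuousAt).continuousWithinAt
              · intro t ht
                rw [interior_Ioo] at ht
                have hat : 0 < a + t := by have := ht.1; linarith
                rw [(hD₂ t hat).deriv]
                have := Real.rpow_pos_of_pos hat (p - 3)
                apply mul_pos (by nlinarith)
                apply mul_pos (by linarith) this
            have heq : Set.EqOn (deriv h₁) h₂ (Set.Ioo 0 s₀) := fun t ht =>
              (hD₁ t (by have := ht.1; linarith)).deriv
            exact hm.congr heq.symm
        have hneg : ∀ t ∈ Set.Ioo s s₀, deriv h t < 0 := by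
          intro t ht
          have hat : 0 < a + t := by have := ht.1; linarith
          rw [(hD t hat).deriv]
          have htseg : t ∈ openSegment ℝ r₀ s₀ := by
            rw [openSegment_eq_Ioo hr₀s₀]
            exact ⟨lt_trans hr₀mem.2 ht.1, ht.2⟩
          obtain ⟨θa, θb, hθa, hθb, hsum, hteq⟩ := htseg
          have hlt2 := hconv.2 (x := r₀) (y := s₀)
            ⟨le_of_lt hr₀mem.1, le_of_lt hr₀s₀⟩ ⟨le_of_lt hs₀, le_rfl⟩
            (ne_of_lt hr₀s₀) hθa hθb hsum
          rw [hteq] at hlt2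
          have : θa • h₁ r₀ + θb • h₁ s₀ ≤ 0 := by
            rw [h₁s₀]
            simp only [smul_eq_mul, mul_zero, add_zero]
            exact mul_nonpos_of_nonneg_of_nonpos (le_of_lt hθa) hr₀
          calc h₁ t < θa • h₁ r₀ + θb • h₁ s₀ := hlt2
            _ ≤ 0 := this
        have hanti : StrictAntiOn h (Set.Icc s s₀) := by
          apply strictAntiOn_of_deriv_neg (convex_Icc s s₀)
          · intro t ht
            exact ((hD t (by have := ht.1; linarith)).continuousAt).continuousWithinAt
          · intro t ht
            rw [interior_Icc] at ht
            exact hneg t ht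
        exact hanti ⟨le_rfl, le_of_lt hlt⟩ ⟨le_of_lt hlt, le_rfl⟩ hlt
  · -- s₀ < s
    have h₁pos : ∀ t ∈ Set.Ioi s₀, 0 < h₁ t := by
      have hmono₁ : StrictMonoOn h₁ (Set.Ici s₀) := by
        apply strictMonoOn_of_deriv_pos (convex_Ici s₀)
        · intro t ht
          exact ((hD₁ t (by have : s₀ ≤ t := ht; linarith)).continuousAt).continuousWithinAt
        · intro t ht
          rw [interior_Ici] at ht
          have hts₀ : s₀ < t := ht
          have hat : 0 < a + t := by linarith
          rw [(hD₁ t hat).deriv]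
          have hmonorpow : (a + s₀) ^ (p - 2) ≤ (a + t) ^ (p - 2) :=
            Real.rpow_le_rpow (le_of_lt has₀) (by linarith) (by linarith)
          simp only [hh₂] at h₂s₀
          have : 0 < p * (p - 1) := by nlinarith
          simp only [hh₂]
          nlinarith
      intro t ht
      have := hmono₁ (Set.mem_Ici.mpr le_rfl) (Set.mem_Ici.mpr (le_of_lt ht)) ht
      rw [h₁s₀] at this
      exact this
    have hmono : StrictMonoOn h (Set.Ici s₀) := by
      apply strictMonoOn_of_deriv_pos (convex_Ici s₀)
      · intro t ht
        exact ((hD t (by have : s₀ ≤ t := ht; linarith)).continuousAt).continuousWithinAt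
      · intro t ht
        rw [interior_Ici] at ht
        have hat : 0 < a + t := by have : s₀ < t := ht; linarith
        rw [(hD t hat).deriv]
        exact h₁pos t ht
    exact hmono (Set.mem_Ici.mpr le_rfl) (Set.mem_Ici.mpr (le_of_lt hgt)) hgt

theorem statement1 (N : ℕ) (hN : 2 ≤ N) (a b : ℝ) (ha : 0 < a) (hb : 0 < b)
    (p : ℝ) (hp : 2 + Real.sqrt (5 * N) * a / b < p)
    (x : Fin N → ℝ) (hx0 : ∀ l, 0 ≤ x l) (hx2 : ∑ l, x l ^ 2 = b ^ 2)
    (hxne : x ≠ fun _ => b / Real.sqrt N) :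
    (N : ℝ) * (a + b / Real.sqrt N) ^ p < ∑ l, (a + x l) ^ p := by
  have hN0 : (0:ℝ) < N := by exact_mod_cast Nat.lt_of_lt_of_le Nat.zero_lt_two hN
  have hsqN : 0 < Real.sqrt N := Real.sqrt_pos.mpr hN0
  set s₀ : ℝ := b / Real.sqrt N with hs₀def
  have hs₀ : 0 < s₀ := div_pos hb hsqN
  have hs₀sq : (N:ℝ) * s₀ ^ 2 = b ^ 2 := by
    rw [hs₀def, div_pow, Real.sq_sqrt (le_of_lt hN0)]
    field_simp
  have h5Npos : (0:ℝ) < 5 * N := by linarith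
  have hp2 : 2 < p := by
    have h1 : 0 < Real.sqrt (5 * N) := Real.sqrt_pos.mpr h5Npos
    have : 0 < Real.sqrt (5 * N) * a / b := div_pos (mul_pos h1 ha) hb
    linarith
  have h5 : (2:ℝ) < Real.sqrt 5 := by
    have h4 : Real.sqrt 4 < Real.sqrt 5 := Real.sqrt_lt_sqrt (by norm_num) (by norm_num)
    have : Real.sqrt 4 = 2 := by
      rw [show (4:ℝ) = 2 ^ 2 by norm_num, Real.sqrt_sq (by norm_num : (0:ℝ) ≤ 2)]
    linarith
  have hgap : 2 * a < (p - 2) * s₀ := by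
    have h1 : Real.sqrt (5 * N) * a / b < p - 2 := by linarith
    have h2 : Real.sqrt (5 * N) * a < (p - 2) * b := (div_lt_iff₀ hb).mp h1
    have h3 : Real.sqrt (5 * N) = Real.sqrt 5 * Real.sqrt N := by
      rw [show (5:ℝ) * N = 5 * N by norm_num, Real.sqrt_mul (by norm_num : (0:ℝ) ≤ 5)]
    rw [h3] at h2
    have h6 : Real.sqrt 5 * a < (p - 2) * s₀ := by
      rw [hs₀def, mul_div_assoc', lt_div_iff₀ hsqN]
      nlinarith
    nlinarith
  obtain ⟨l₀, hl₀⟩ := Function.ne_iff.mp hxne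
  have key := key_ineq a s₀ p ha hs₀ hp2 hgap
  set C : ℝ := p * (a + s₀) ^ (p - 1) / (2 * s₀) with hC
  have hle : ∀ l, (a + s₀) ^ p + C * ((x l) ^ 2 - s₀ ^ 2) ≤ (a + x l) ^ p := by
    intro l
    rcases eq_or_ne (x l) s₀ with h | h
    · rw [h]; simp
    · exact (key (x l) (hx0 l) h).le
  have hlt : (a + s₀) ^ p + C * ((x l₀) ^ 2 - s₀ ^ 2) < (a + x l₀) ^ p :=
    key (x l₀) (hx0 l₀) hl₀
  have hsum := Finset.sum_lt_sum (fun i (_ : i ∈ Finset.univ) => hle i)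
    ⟨l₀, Finset.mem_univ _, hlt⟩
  have hcalc : ∑ l : Fin N, ((a + s₀) ^ p + C * ((x l) ^ 2 - s₀ ^ 2))
      = (N:ℝ) * (a + s₀) ^ p := by
    rw [Finset.sum_add_distrib, Finset.sum_const, Finset.card_univ, Fintype.card_fin,
      nsmul_eq_mul, ← Finset.mul_sum, Finset.sum_sub_distrib, hx2, Finset.sum_const,
      Finset.card_univ, Fintype.card_fin, nsmul_eq_mul]
    have : b ^ 2 - (N:ℝ) * s₀ ^ 2 = 0 := by linarith
    rw [this, mul_zero, add_zero]
  rw [hcalc] at hsum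
  exact hsum

end FramesErasures
end
end

section
/- Every uniform real (n,k)-frame F = {f_1,…,f_n} satisfies e_2^2(F)² = k²/n² + k(n−k)/(n²(n−1)) + (2k/(n²(n−1)))·Σ_{i≠j} |⟨f_i,f_j⟩|. Consequently, a uniform (n,k)-frame minimizes e_2^2 among all uniform (n,k)-frames if and only if it minimizes Σ_{i≠j} |⟨f_i,f_j⟩| among all uniform (n,k)-frames. -/
open Matrix
open scoped Classical

noncomputable section

namespace FramesErasures

lemma key_norm {κ : ℕ} (T : EuclideanSpace ℝ (Fin κ) →L[ℝ] EuclideanSpace ℝ (Fin κ))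
    (u w : EuclideanSpace ℝ (Fin κ)) (r a : ℝ)
    (hu : (inner ℝ u u : ℝ) = r) (hw : (inner ℝ w w : ℝ) = r) (ha : (inner ℝ u w : ℝ) = a)
    (hT : ∀ x, T x = (inner ℝ u x : ℝ) • u + (inner ℝ w x : ℝ) • w) :
    ‖T‖ = r + |a| := by
  have hr : 0 ≤ r := hu ▸ real_inner_self_nonneg
  have hc : 0 ≤ r + |a| := by positivity
  refine le_antisymm ?_ ?_
  · refine ContinuousLinearMap.opNorm_le_bound _ hc fun x => ?_
    set p : ℝ := inner ℝ u x with hp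
    set q : ℝ := inner ℝ w x with hq
    have hTx : T x = p • u + q • w := hT x
    have h1 : ‖T x‖ ^ 2 ≤ (r + |a|) * (p ^ 2 + q ^ 2) := by
      have e1 : (inner ℝ (T x) (T x) : ℝ) = ‖T x‖ ^ 2 := real_inner_self_eq_norm_sq _
      have e2 : (inner ℝ (T x) (T x) : ℝ) = p^2*r + 2*(p*q)*a + q^2*r := by
        rw [hTx, real_inner_add_add_self]
        simp only [real_inner_smul_left, real_inner_smul_right, hu, hw, ha]
        ring
      rw [← e1, e2]
      nlinarith [le_abs_self a, neg_abs_le a, sq_nonneg (p+q), sq_nonneg (p-q), hr]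
    have h2 : p ^ 2 + q ^ 2 = (inner ℝ x (T x) : ℝ) := by
      rw [hTx, inner_add_right, real_inner_smul_right, real_inner_smul_right,
        real_inner_comm u x, real_inner_comm w x, ← hp, ← hq]
      ring
    have h3 : (inner ℝ x (T x) : ℝ) ≤ ‖x‖ * ‖T x‖ := real_inner_le_norm x (T x)
    rcases eq_or_lt_of_le (norm_nonneg (T x)) with h | h
    · rw [← h]; positivity
    · have : ‖T x‖ * ‖T x‖ ≤ ((r + |a|) * ‖x‖) * ‖T x‖ := by nlinarith
      exact le_of_mul_le_mul_right this h
  · rcases eq_or_lt_of_le hc with h | hcpos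
    · rw [← h]; exact norm_nonneg T
    · set s : ℝ := if 0 ≤ a then 1 else -1 with hs
      have hsa : s * a = |a| := by
        rcases le_or_gt 0 a with h' | h'
        · simp [hs, h', abs_of_nonneg h']
        · simp [hs, not_le.mpr h', abs_of_neg h']
      have hss : s * s = 1 := by
        rcases le_or_gt 0 a with h' | h'
        · simp [hs, h']
        · simp [hs, h'.not_ge]
      set x₀ : EuclideanSpace ℝ (Fin κ) := u + s • w with hx₀
      have hux : (inner ℝ u x₀ : ℝ) = r + |a| := by
        rw [hx₀, inner_add_right, real_inner_smul_right, hu, ha, hsa]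
      have hwx : (inner ℝ w x₀ : ℝ) = a + s * r := by
        rw [hx₀, inner_add_right, real_inner_smul_right, real_inner_comm u w, ha, hw]
      have hx0 : T x₀ = (r + |a|) • x₀ := by
        rw [hT, hux, hwx, hx₀, smul_add, smul_smul]
        congr 1
        congr 1
        linear_combination s * hsa - a * hss
      have hnx : ‖x₀‖ ^ 2 = 2 * (r + |a|) := by
        have : (inner ℝ x₀ x₀ : ℝ) = ‖x₀‖ ^ 2 := real_inner_self_eq_norm_sq _
        rw [← this, hx₀, real_inner_add_add_self, real_inner_smul_right,
          real_inner_smul_left, real_inner_smul_right, hu, hw, ha]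
        linear_combination 2 * hsa + r * hss
      have hxpos : 0 < ‖x₀‖ := by
        by_contra hcon
        push_neg at hcon
        have : ‖x₀‖ = 0 := le_antisymm hcon (norm_nonneg _)
        rw [this] at hnx
        nlinarith
      have : (r + |a|) * ‖x₀‖ ≤ ‖T‖ * ‖x₀‖ := by
        calc (r + |a|) * ‖x₀‖ = ‖(r + |a|) • x₀‖ := by
              rw [norm_smul, Real.norm_eq_abs, abs_of_nonneg hc]
          _ = ‖T x₀‖ := by rw [hx0]
          _ ≤ ‖T‖ * ‖x₀‖ := T.le_opNorm x₀
      exact le_of_mul_le_mul_right this hxpos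


lemma toECLM_apply {k : ℕ} (A : Matrix (Fin k) (Fin k) ℝ) (x : EuclideanSpace ℝ (Fin k)) (c : Fin k) :
    (Matrix.toEuclideanCLM (𝕜 := ℝ) A x) c = ∑ b, A c b * x b := by
  have := congrFun (Matrix.ofLp_toEuclideanCLM (𝕜 := ℝ) A x) c
  simpa [Matrix.toLin'_apply, Matrix.mulVec, dotProduct] using this


lemma opNorm_nonneg {k : ℕ} (A : Matrix (Fin k) (Fin k) ℝ) : 0 ≤ opNorm A := norm_nonneg _

lemma opNorm_pair {n k : ℕ} (V : Matrix (Fin n) (Fin k) ℝ) (hU : Uniform n k V)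
    (i j : Fin n) (hij : i ≠ j) :
    opNorm (Vᵀ * diagS ({i,j} : Finset (Fin n)) * V) = (k : ℝ) / n + |(V * Vᵀ) i j| := by
  set u : EuclideanSpace ℝ (Fin k) := (WithLp.equiv 2 (Fin k → ℝ)).symm (fun c => V i c) with hu'
  set w : EuclideanSpace ℝ (Fin k) := (WithLp.equiv 2 (Fin k → ℝ)).symm (fun c => V j c) with hw'
  have huw : ∀ (i' j' : Fin n), (inner ℝ ((WithLp.equiv 2 (Fin k → ℝ)).symm (fun c => V i' c))
      ((WithLp.equiv 2 (Fin k → ℝ)).symm (fun c => V j' c)) : ℝ) = (V * Vᵀ) i' j' := by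
    intro i' j'
    simp [PiLp.inner_apply, RCLike.inner_apply, Matrix.mul_apply, WithLp.equiv_symm_apply, PiLp.toLp_apply, mul_comm]
  have hA : ∀ a b, (Vᵀ * diagS ({i,j} : Finset (Fin n)) * V) a b
      = V i a * V i b + V j a * V j b := by
    intro a b
    rw [Matrix.mul_apply]
    simp only [diagS, Matrix.mul_diagonal, Matrix.transpose_apply]
    simp only [mul_ite, mul_one, mul_zero, ite_mul, zero_mul]
    rw [Finset.sum_ite_mem, Finset.univ_inter, Finset.sum_pair hij]
  have hT : ∀ x, (Matrix.toEuclideanCLM (𝕜 := ℝ) (Vᵀ * diagS ({i,j} : Finset (Fin n)) * V)) x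
      = (inner ℝ u x : ℝ) • u + (inner ℝ w x : ℝ) • w := by
    intro x
    ext c
    rw [toECLM_apply]
    have h2 : ((inner ℝ u x : ℝ) • u + (inner ℝ w x : ℝ) • w) c
        = (∑ b, V i b * x b) * V i c + (∑ b, V j b * x b) * V j c := by
      simp [hu', hw', PiLp.inner_apply, RCLike.inner_apply, WithLp.equiv_symm_apply, PiLp.toLp_apply, mul_comm]
    rw [h2]
    simp only [hA]
    rw [Finset.sum_mul, Finset.sum_mul, ← Finset.sum_add_distrib]
    congr 1; funext b; ring
  have := key_norm _ u w ((k : ℝ)/n) ((V * Vᵀ) i j)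
    (by rw [hu', huw i i, hU i]) (by rw [hw', huw j j, hU j]) (by rw [hu', hw', huw i j]) hT
  exact this


lemma trace_sq {n k : ℕ} (V : Matrix (Fin n) (Fin k) ℝ) (hP : Vᵀ * V = 1) :
    ∑ i : Fin n, ∑ j : Fin n, ((V * Vᵀ) i j) ^ 2 = (k : ℝ) := by
  set G := V * Vᵀ with hG
  have hsymm : ∀ i j, G i j = G j i := by
    intro i j
    simp [hG, Matrix.mul_apply, mul_comm]
  have hGG : G * G = G := by
    rw [hG, Matrix.mul_assoc, ← Matrix.mul_assoc Vᵀ V Vᵀ, hP, Matrix.one_mul]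
  have htr : G.trace = (k : ℝ) := by
    rw [hG, Matrix.trace_mul_comm, hP, Matrix.trace_one]
    simp
  calc ∑ i : Fin n, ∑ j : Fin n, (G i j) ^ 2
      = ∑ i : Fin n, (G * G) i i := by
        refine Finset.sum_congr rfl fun i _ => ?_
        rw [Matrix.mul_apply]
        refine Finset.sum_congr rfl fun j _ => ?_
        rw [sq, hsymm i j]
    _ = (G * G).trace := by rw [Matrix.trace]; rfl
    _ = (k : ℝ) := by rw [hGG, htr]



lemma sum_card_two {n : ℕ} (F : Finset (Fin n) → ℝ) :
    2 * ∑ S ∈ Finset.univ.filter (fun S : Finset (Fin n) => S.card = 2), F S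
      = ∑ p ∈ (Finset.univ : Finset (Fin n)).offDiag, F {p.1, p.2} := by
  have hmaps : ∀ p ∈ (Finset.univ : Finset (Fin n)).offDiag,
      ({p.1, p.2} : Finset (Fin n)) ∈ Finset.univ.filter (fun S : Finset (Fin n) => S.card = 2) := by
    intro p hp
    simp only [Finset.mem_filter, Finset.mem_univ, true_and]
    exact Finset.card_pair (Finset.mem_offDiag.mp hp).2.2
  rw [← Finset.sum_fiberwise_of_maps_to (f := fun p : Fin n × Fin n => F {p.1, p.2}) hmaps]
  rw [Finset.mul_sum]
  refine Finset.sum_congr rfl fun S hS => ?_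
  obtain ⟨i, j, hij, rfl⟩ := Finset.card_eq_two.mp (Finset.mem_filter.mp hS).2
  have hfib : (Finset.univ.offDiag.filter fun p : Fin n × Fin n => ({p.1, p.2} : Finset (Fin n)) = {i, j})
      = {(i, j), (j, i)} := by
    ext ⟨a, b⟩
    simp only [Finset.mem_filter, Finset.mem_offDiag, Finset.mem_univ, true_and,
      Finset.mem_insert, Finset.mem_singleton, Prod.mk.injEq]
    constructor
    · rintro ⟨hab, h⟩
      have ha : a ∈ ({i, j} : Finset (Fin n)) := h ▸ Finset.mem_insert_self a {b}
      have hb : b ∈ ({i, j} : Finset (Fin n)) := h ▸ Finset.mem_insert_of_mem (Finset.mem_singleton_self b)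
      simp only [Finset.mem_insert, Finset.mem_singleton] at ha hb
      rcases ha with rfl | rfl <;> rcases hb with rfl | rfl
      · exact absurd rfl hab
      · left; exact ⟨rfl, rfl⟩
      · right; exact ⟨rfl, rfl⟩
      · exact absurd rfl hab
    · rintro (⟨rfl, rfl⟩ | ⟨rfl, rfl⟩)
      · exact ⟨hij, rfl⟩
      · exact ⟨hij.symm, Finset.pair_comm a b⟩
  rw [hfib, Finset.sum_insert (by simp [Prod.ext_iff, hij]), Finset.sum_singleton]
  rw [Finset.pair_comm j i]
  ring

lemma sum_offDiag {n : ℕ} (f : Fin n → Fin n → ℝ) :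
    ∑ p ∈ (Finset.univ : Finset (Fin n)).offDiag, f p.1 p.2
      = ∑ i : Fin n, ∑ j ∈ Finset.univ.erase i, f i j := by
  have h : (Finset.univ : Finset (Fin n)).offDiag
      = (Finset.univ ×ˢ Finset.univ).filter fun p => p.1 ≠ p.2 := by
    ext p; simp [Finset.mem_offDiag]
  rw [h, Finset.sum_filter, Finset.sum_product]
  refine Finset.sum_congr rfl fun i _ => ?_
  rw [← Finset.sum_filter]
  congr 1
  ext j
  simp [Finset.mem_erase, ne_comm, eq_comm]


lemma formula (n k : ℕ) (hn : 2 ≤ n) (V : Matrix (Fin n) (Fin k) ℝ)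
    (hP : Vᵀ * V = 1) (hU : Uniform n k V) :
    errP V 2 2 ^ 2 =
      (k : ℝ) ^ 2 / (n : ℝ) ^ 2 +
        (k : ℝ) * ((n : ℝ) - k) / ((n : ℝ) ^ 2 * ((n : ℝ) - 1)) +
        (2 * (k : ℝ) / ((n : ℝ) ^ 2 * ((n : ℝ) - 1))) *
          ∑ i : Fin n, ∑ j ∈ Finset.univ.erase i, |(V * Vᵀ) i j| := by
  have hn0 : (0 : ℝ) < n := by positivity
  have hn1 : (0 : ℝ) < (n : ℝ) - 1 := by
    have : (2 : ℝ) ≤ n := by exact_mod_cast hn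
    linarith
  -- choose 2
  have hchN : n.choose 2 * 2 = n * (n - 1) := by
    rw [Nat.choose_two_right, Nat.div_mul_cancel]
    have he : Even ((n - 1) * (n - 1 + 1)) := Nat.even_mul_succ_self (n - 1)
    have hn' : n - 1 + 1 = n := by omega
    rw [hn'] at he
    rw [mul_comm]
    exact he.two_dvd
  have hch : (n.choose 2 : ℝ) * 2 = (n : ℝ) * ((n : ℝ) - 1) := by
    have := congrArg (Nat.cast : ℕ → ℝ) hchN
    push_cast [Nat.cast_sub (by omega : 1 ≤ n)] at this
    exact this
  have hchpos : (0 : ℝ) < (n.choose 2 : ℝ) := by nlinarith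
  set G := V * Vᵀ with hG
  set s := ∑ i : Fin n, ∑ j ∈ Finset.univ.erase i, |G i j| with hs
  -- the inner sum
  have hsum : ∑ S ∈ Finset.univ.filter (fun S : Finset (Fin n) => S.card = 2),
      opNorm (Vᵀ * diagS S * V) ^ (2 : ℝ)
      = (1 / 2) * (((n : ℝ)^2 - n) * ((k:ℝ)/n)^2 + 2 * ((k:ℝ)/n) * s + ((k:ℝ) - (k:ℝ)^2/n)) := by
    have hpow : ∀ S : Finset (Fin n), opNorm (Vᵀ * diagS S * V) ^ (2 : ℝ) = opNorm (Vᵀ * diagS S * V) ^ (2 : ℕ) := by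
      intro S
      rw [show (2 : ℝ) = ((2 : ℕ) : ℝ) by norm_num, Real.rpow_natCast]
    simp_rw [hpow]
    have h2 := sum_card_two (fun S : Finset (Fin n) => opNorm (Vᵀ * diagS S * V) ^ (2 : ℕ))
    have h3 : ∑ p ∈ (Finset.univ : Finset (Fin n)).offDiag,
        opNorm (Vᵀ * diagS ({p.1, p.2} : Finset (Fin n)) * V) ^ (2 : ℕ)
        = ∑ p ∈ (Finset.univ : Finset (Fin n)).offDiag, ((k:ℝ)/n + |G p.1 p.2|) ^ (2:ℕ) := by
      refine Finset.sum_congr rfl fun p hp => ?_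
      rw [opNorm_pair V hU p.1 p.2 (Finset.mem_offDiag.mp hp).2.2, ← hG]
    have h4 : ∑ p ∈ (Finset.univ : Finset (Fin n)).offDiag, ((k:ℝ)/n + |G p.1 p.2|) ^ (2:ℕ)
        = ((n : ℝ)^2 - n) * ((k:ℝ)/n)^2 + 2 * ((k:ℝ)/n) * s + ((k:ℝ) - (k:ℝ)^2/n) := by
      have expand : ∀ p : Fin n × Fin n, ((k:ℝ)/n + |G p.1 p.2|) ^ (2:ℕ)
          = ((k:ℝ)/n)^2 + 2 * ((k:ℝ)/n) * |G p.1 p.2| + (G p.1 p.2)^2 := by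
        intro p
        rw [add_sq, sq_abs]
      simp_rw [expand]
      rw [Finset.sum_add_distrib, Finset.sum_add_distrib, Finset.sum_const, nsmul_eq_mul]
      have hcard : (Finset.univ : Finset (Fin n)).offDiag.card = n * n - n := by
        rw [Finset.offDiag_card]
        simp
      have hc2 : (((Finset.univ : Finset (Fin n)).offDiag.card : ℕ) : ℝ) = (n : ℝ) ^ 2 - n := by
        rw [hcard]
        push_cast [Nat.cast_sub (Nat.le_mul_of_pos_left n (by omega : 0 < n))]
        ring
      rw [hc2]
      have e1 : ∑ p ∈ (Finset.univ : Finset (Fin n)).offDiag, 2 * ((k:ℝ)/n) * |G p.1 p.2|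
          = 2 * ((k:ℝ)/n) * s := by
        rw [← Finset.mul_sum, sum_offDiag (fun i j => |G i j|), ← hs]
      have e2 : ∑ p ∈ (Finset.univ : Finset (Fin n)).offDiag, (G p.1 p.2) ^ 2
          = (k:ℝ) - (k:ℝ)^2/n := by
        rw [sum_offDiag (fun i j => (G i j) ^ 2)]
        have hdiag : ∀ i : Fin n, ∑ j ∈ Finset.univ.erase i, (G i j)^2
            = (∑ j : Fin n, (G i j)^2) - (G i i)^2 := fun i =>
          Finset.sum_erase_eq_sub (Finset.mem_univ i)
        simp_rw [hdiag, Finset.sum_sub_distrib]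
        have htr := trace_sq V hP
        rw [← hG] at htr
        rw [htr]
        have hdval : ∀ i : Fin n, (G i i)^2 = ((k:ℝ)/n)^2 := fun i => by rw [hG, hU i]
        simp_rw [hdval, Finset.sum_const, nsmul_eq_mul]
        simp only [Finset.card_univ, Fintype.card_fin]
        field_simp
      rw [e1, e2]
    rw [h3, h4] at h2
    linarith
  -- now errP
  have hXnn : 0 ≤ (n.choose 2 : ℝ)⁻¹ *
      ∑ S ∈ Finset.univ.filter (fun S : Finset (Fin n) => S.card = 2),
        opNorm (Vᵀ * diagS S * V) ^ (2 : ℝ) := by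
    apply mul_nonneg (by positivity)
    apply Finset.sum_nonneg
    intro S _
    exact Real.rpow_nonneg (opNorm_nonneg _) _
  have herr : errP V 2 2 ^ 2 = (n.choose 2 : ℝ)⁻¹ *
      ∑ S ∈ Finset.univ.filter (fun S : Finset (Fin n) => S.card = 2),
        opNorm (Vᵀ * diagS S * V) ^ (2 : ℝ) := by
    rw [errP]
    rw [← Real.rpow_natCast (_ ^ ((1:ℝ)/2)) 2, ← Real.rpow_mul hXnn]
    norm_num
  rw [herr, hsum]
  have hchinv : (n.choose 2 : ℝ)⁻¹ = 2 / ((n : ℝ) * ((n : ℝ) - 1)) := by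
    rw [eq_div_iff (by positivity)]
    field_simp
    linarith [hch]
  rw [hchinv]
  field_simp
  ring



lemma errP_nn {n k : ℕ} (V : Matrix (Fin n) (Fin k) ℝ) : 0 ≤ errP V 2 2 := by
  apply Real.rpow_nonneg
  apply mul_nonneg (by positivity)
  apply Finset.sum_nonneg
  intro S _
  exact Real.rpow_nonneg (norm_nonneg _) _

lemma sV_zero {n : ℕ} (V : Matrix (Fin n) (Fin 0) ℝ) :
    ∑ i : Fin n, ∑ j ∈ Finset.univ.erase i, |(V * Vᵀ) i j| = 0 := by
  simp [Matrix.mul_apply]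

theorem statement3 (n k : ℕ) (hn : 2 ≤ n) :
    (∀ V : Matrix (Fin n) (Fin k) ℝ, Vᵀ * V = 1 → Uniform n k V →
      errP V 2 2 ^ 2 =
        (k : ℝ) ^ 2 / (n : ℝ) ^ 2 +
          (k : ℝ) * ((n : ℝ) - k) / ((n : ℝ) ^ 2 * ((n : ℝ) - 1)) +
          (2 * (k : ℝ) / ((n : ℝ) ^ 2 * ((n : ℝ) - 1))) *
            ∑ i : Fin n, ∑ j ∈ Finset.univ.erase i, |(V * Vᵀ) i j|) ∧
    (∀ V : Matrix (Fin n) (Fin k) ℝ, Vᵀ * V = 1 → Uniform n k V →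
      ((∀ W : Matrix (Fin n) (Fin k) ℝ, Wᵀ * W = 1 → Uniform n k W →
          errP V 2 2 ≤ errP W 2 2) ↔
        (∀ W : Matrix (Fin n) (Fin k) ℝ, Wᵀ * W = 1 → Uniform n k W →
          ∑ i : Fin n, ∑ j ∈ Finset.univ.erase i, |(V * Vᵀ) i j| ≤
            ∑ i : Fin n, ∑ j ∈ Finset.univ.erase i, |(W * Wᵀ) i j|))) := by
  have sq_iff : ∀ a b : ℝ, 0 ≤ a → 0 ≤ b → (a ≤ b ↔ a ^ 2 ≤ b ^ 2) := by
    intro a b ha hb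
    constructor
    · intro h; nlinarith
    · intro h; nlinarith
  refine ⟨fun V hP hU => formula n k hn V hP hU, ?_⟩
  intro V hPV hUV
  have hn1 : (0 : ℝ) < (n : ℝ) - 1 := by
    have : (2 : ℝ) ≤ n := by exact_mod_cast hn
    linarith
  have hn0 : (0 : ℝ) < n := by positivity
  set A : ℝ := (k : ℝ) ^ 2 / (n : ℝ) ^ 2 +
      (k : ℝ) * ((n : ℝ) - k) / ((n : ℝ) ^ 2 * ((n : ℝ) - 1)) with hA
  set B : ℝ := 2 * (k : ℝ) / ((n : ℝ) ^ 2 * ((n : ℝ) - 1)) with hB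
  have hBnn : 0 ≤ B := by rw [hB]; positivity
  have keyiff : ∀ (W₁ W₂ : Matrix (Fin n) (Fin k) ℝ), W₁ᵀ * W₁ = 1 → Uniform n k W₁ →
      W₂ᵀ * W₂ = 1 → Uniform n k W₂ →
      (errP W₁ 2 2 ≤ errP W₂ 2 2 ↔
        B * (∑ i : Fin n, ∑ j ∈ Finset.univ.erase i, |(W₁ * W₁ᵀ) i j|) ≤
        B * (∑ i : Fin n, ∑ j ∈ Finset.univ.erase i, |(W₂ * W₂ᵀ) i j|)) := by
    intro W₁ W₂ h1 h2 h3 h4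
    rw [sq_iff _ _ (errP_nn W₁) (errP_nn W₂), formula n k hn W₁ h1 h2, formula n k hn W₂ h3 h4,
      ← hA, ← hB]
    constructor
    · intro h; linarith
    · intro h; linarith
  constructor
  · intro h W hPW hUW
    rcases Nat.eq_zero_or_pos k with hk | hk
    · subst hk
      rw [sV_zero V, sV_zero W]
    · have hBpos : 0 < B := by
        rw [hB]
        have : (0 : ℝ) < k := by exact_mod_cast hk
        positivity
      have := (keyiff V W hPV hUV hPW hUW).mp (h W hPW hUW)
      exact le_of_mul_le_mul_left this hBpos
  · intro h W hPW hUW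
    exact (keyiff V W hPV hUV hPW hUW).mpr
      (mul_le_mul_of_nonneg_left (h W hPW hUW) hBnn)


end FramesErasures
end
end

section
/- Let F be a real 2-uniform (n,k)-frame with associated graph G_F. Then either G_F contains an induced complete bipartite subgraph on 3 vertices, or G_F is switching equivalent to the complete graph on n vertices (in which case k = n−1). Consequently, if k < n−1 then e_3^∞(F) = k/n + 2·c_{n,k}; in particular, any two real 2-uniform (n,k)-frames have the same value of e_3^∞. -/
open Matrix
open scoped Classical

noncomputable section

namespace FramesErasures

/-! ### Auxiliary lemmas -/

open scoped Matrix.Norms.L2Operator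

lemma euc_norm {m : ℕ} (z : EuclideanSpace ℝ (Fin m)) : ‖z‖ = Real.sqrt (∑ i, (z i)^2) := by
  rw [EuclideanSpace.norm_eq]
  congr 1
  exact Finset.sum_congr rfl fun i _ => by rw [Real.norm_eq_abs, sq_abs]

lemma opNorm_le_of_sq_sum {m : ℕ} (A : Matrix (Fin m) (Fin m) ℝ) (β : ℝ) (hβ : 0 ≤ β)
    (h : ∀ x : Fin m → ℝ, ∑ i, (A.mulVec x i)^2 ≤ β^2 * ∑ i, (x i)^2) :
    opNorm A ≤ β := by
  refine ContinuousLinearMap.opNorm_le_bound _ hβ fun x => ?_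
  have h1 : (Matrix.toEuclideanCLM (𝕜 := ℝ) A) x
      = (WithLp.equiv 2 (Fin m → ℝ)).symm (A *ᵥ (fun i => x i)) := rfl
  rw [h1, euc_norm, euc_norm]
  calc Real.sqrt (∑ i, (((WithLp.equiv 2 (Fin m → ℝ)).symm (A *ᵥ (fun i => x i))) i)^2)
      = Real.sqrt (∑ i, (A.mulVec (fun i => x i) i)^2) := rfl
    _ ≤ Real.sqrt (β^2 * ∑ i, (x i)^2) := Real.sqrt_le_sqrt (h _)
    _ = β * Real.sqrt (∑ i, (x i)^2) := by
        rw [Real.sqrt_mul (sq_nonneg β), Real.sqrt_sq hβ]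

lemma le_opNorm_of_eig {m : ℕ} (A : Matrix (Fin m) (Fin m) ℝ) (μ : ℝ) (hμ : 0 ≤ μ)
    (y : Fin m → ℝ) (hy : y ≠ 0) (h : A.mulVec y = μ • y) : μ ≤ opNorm A := by
  set x : EuclideanSpace ℝ (Fin m) := (WithLp.equiv 2 _).symm y with hxdef
  have hxn : x ≠ 0 := by
    intro h0
    apply hy
    have h1 : (WithLp.equiv 2 (Fin m → ℝ)) x = y := by
      rw [hxdef]; exact (WithLp.equiv 2 _).apply_symm_apply y
    rw [h0] at h1
    simpa using h1.symm
  have hx : 0 < ‖x‖ := norm_pos_iff.mpr hxn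
  have hb := (Matrix.toEuclideanCLM (𝕜 := ℝ) A).le_opNorm x
  have h1 : (Matrix.toEuclideanCLM (𝕜 := ℝ) A) x = μ • x := by
    have h2 : (Matrix.toEuclideanCLM (𝕜 := ℝ) A) x
        = (WithLp.equiv 2 (Fin m → ℝ)).symm (A *ᵥ y) := rfl
    rw [h2, h]
    rfl
  rw [h1, norm_smul, Real.norm_eq_abs, abs_of_nonneg hμ] at hb
  exact le_of_mul_le_mul_right hb hx

lemma opNorm_eq_l2 {m : ℕ} (A : Matrix (Fin m) (Fin m) ℝ) : opNorm A = ‖A‖ := rfl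

lemma conjT_eq_T {m n : ℕ} (A : Matrix (Fin m) (Fin n) ℝ) : Aᴴ = Aᵀ := by
  ext i j; simp [Matrix.conjTranspose_apply]

lemma norm_AtA {m n : ℕ} (A : Matrix (Fin m) (Fin n) ℝ) : ‖Aᵀ * A‖ = ‖A * Aᵀ‖ := by
  rw [← conjT_eq_T, Matrix.l2_opNorm_conjTranspose_mul_self]
  have h2 : A * Aᴴ = (Aᴴ)ᴴ * Aᴴ := by rw [Matrix.conjTranspose_conjTranspose]
  rw [h2, Matrix.l2_opNorm_conjTranspose_mul_self, Matrix.l2_opNorm_conjTranspose]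

lemma diagS_transpose {n : ℕ} (S : Finset (Fin n)) : (diagS S)ᵀ = diagS S :=
  Matrix.diagonal_transpose _

lemma diagS_mul_diagS {n : ℕ} (S : Finset (Fin n)) : diagS S * diagS S = diagS S := by
  ext i j
  rcases eq_or_ne i j with rfl | h
  · by_cases h2 : i ∈ S <;>
      simp [diagS, Matrix.diagonal_mul_diagonal, Matrix.diagonal_apply_eq, h2]
  · simp [diagS, Matrix.diagonal_mul_diagonal, Matrix.diagonal_apply_ne _ h]

lemma normM_eq_normN {n k : ℕ} (V : Matrix (Fin n) (Fin k) ℝ) (S : Finset (Fin n)) :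
    opNorm (Vᵀ * diagS S * V) = ‖diagS S * (V * Vᵀ) * diagS S‖ := by
  have hM : Vᵀ * diagS S * V = (diagS S * V)ᵀ * (diagS S * V) := by
    conv_lhs => rw [← diagS_mul_diagS S]
    rw [Matrix.transpose_mul, diagS_transpose]
    simp only [Matrix.mul_assoc]
  have hN : diagS S * (V * Vᵀ) * diagS S = (diagS S * V) * (diagS S * V)ᵀ := by
    rw [Matrix.transpose_mul, diagS_transpose]
    simp only [Matrix.mul_assoc]
  rw [hM, hN, opNorm_eq_l2, norm_AtA]

lemma c_nonneg (n k : ℕ) : 0 ≤ c n k := Real.sqrt_nonneg _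

lemma Qsymm {n k : ℕ} (F : TwoUniformFrame n k) (i j : Fin n) : F.Q i j = F.Q j i := by
  have h := congrFun (congrFun F.symm i) j
  simpa [Matrix.transpose_apply] using h.symm

lemma Qsq {n k : ℕ} (F : TwoUniformFrame n k) {i j : Fin n} (h : i ≠ j) :
    F.Q i j * F.Q i j = 1 := by
  rcases F.offdiag i j h with h1 | h1 <;> rw [h1] <;> norm_num

section Triple

variable {n k : ℕ} (F : TwoUniformFrame n k) {S : Finset (Fin n)} {p q r : Fin n}

lemma mulVec_N (hpq : p ≠ q) (hpr : p ≠ r) (hqr : q ≠ r) (hS : S = {p, q, r})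
    (x : Fin n → ℝ) (i : Fin n) :
    ((diagS S * (F.V * F.Vᵀ) * diagS S) *ᵥ x) i
      = (if i ∈ S then (1:ℝ) else 0) *
        ((k / n) * x i + c n k * (F.Q i p * x p + F.Q i q * x q + F.Q i r * x r)) := by
  have hrw : (diagS S * (F.V * F.Vᵀ) * diagS S) *ᵥ x
      = diagS S *ᵥ ((F.V * F.Vᵀ) *ᵥ (diagS S *ᵥ x)) := by
    rw [Matrix.mulVec_mulVec, Matrix.mulVec_mulVec]
  have hy : ∀ (z : Fin n → ℝ) j, (diagS S *ᵥ z) j = (if j ∈ S then (1:ℝ) else 0) * z j :=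
    fun z j => Matrix.mulVec_diagonal _ _ _
  have hsum : ∑ j, F.Q i j * ((if j ∈ S then (1:ℝ) else 0) * x j)
      = F.Q i p * x p + F.Q i q * x q + F.Q i r * x r := by
    have h1 : ∀ j, F.Q i j * ((if j ∈ S then (1:ℝ) else 0) * x j)
        = if j ∈ S then F.Q i j * x j else 0 := fun j => by
      by_cases h : j ∈ S <;> simp [h]
    simp only [h1]
    rw [Finset.sum_ite_mem, Finset.univ_inter, hS,
      Finset.sum_insert (by simp [hpq, hpr]), Finset.sum_insert (by simp [hqr]),
      Finset.sum_singleton, add_assoc]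
  have hinner : ((F.V * F.Vᵀ) *ᵥ (diagS S *ᵥ x)) i
      = (k / n) * ((if i ∈ S then (1:ℝ) else 0) * x i)
        + c n k * (F.Q i p * x p + F.Q i q * x q + F.Q i r * x r) := by
    rw [F.gram, Matrix.add_mulVec, Matrix.smul_mulVec, Matrix.smul_mulVec,
      Matrix.one_mulVec]
    have hQ : (F.Q *ᵥ (diagS S *ᵥ x)) i = ∑ j, F.Q i j * ((if j ∈ S then (1:ℝ) else 0) * x j) := by
      have h0 : (F.Q *ᵥ (diagS S *ᵥ x)) i = ∑ j, F.Q i j * (diagS S *ᵥ x) j := rfl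
      rw [h0]
      exact Finset.sum_congr rfl fun j _ => by rw [hy x j]
    simp only [Pi.add_apply, Pi.smul_apply, smul_eq_mul, hQ, hsum, hy x i]
  rw [hrw, hy, hinner]
  by_cases h : i ∈ S <;> simp [h]

lemma sum_sq_N (hpq : p ≠ q) (hpr : p ≠ r) (hqr : q ≠ r) (hS : S = {p, q, r})
    (x : Fin n → ℝ) :
    ∑ i, (((diagS S * (F.V * F.Vᵀ) * diagS S) *ᵥ x) i)^2
      = ((k / n) * x p + c n k * (F.Q p p * x p + F.Q p q * x q + F.Q p r * x r))^2
      + ((k / n) * x q + c n k * (F.Q q p * x p + F.Q q q * x q + F.Q q r * x r))^2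
      + ((k / n) * x r + c n k * (F.Q r p * x p + F.Q r q * x q + F.Q r r * x r))^2 := by
  have hzero : ∀ i ∈ Finset.univ, i ∉ S →
      (((diagS S * (F.V * F.Vᵀ) * diagS S) *ᵥ x) i)^2 = 0 := by
    intro i _ hi
    rw [mulVec_N F hpq hpr hqr hS x i, if_neg hi]
    ring
  have hsum3 : ∀ g : Fin n → ℝ, ∑ i ∈ S, g i = g p + g q + g r := by
    intro g
    conv_lhs => rw [hS]
    rw [Finset.sum_insert (by simp [hpq, hpr]), Finset.sum_insert (by simp [hqr]),
      Finset.sum_singleton, add_assoc]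
  rw [← Finset.sum_subset (Finset.subset_univ S) hzero, hsum3]
  have hp : p ∈ S := by rw [hS]; simp
  have hq : q ∈ S := by rw [hS]; simp
  have hr : r ∈ S := by rw [hS]; simp
  rw [mulVec_N F hpq hpr hqr hS x p, mulVec_N F hpq hpr hqr hS x q,
    mulVec_N F hpq hpr hqr hS x r, if_pos hp, if_pos hq, if_pos hr]
  ring

end Triple

set_option maxHeartbeats 1600000 in
lemma key_ineq_s7 (κ C s t u a b d : ℝ) (hκ : 0 ≤ κ) (hC : 0 ≤ C)
    (ha : a = 1 ∨ a = -1) (hb : b = 1 ∨ b = -1) (hd : d = 1 ∨ d = -1) :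
    (κ*s + C*(0*s + a*t + b*u))^2 + (κ*t + C*(a*s + 0*t + d*u))^2
      + (κ*u + C*(b*s + d*t + 0*u))^2 ≤ (κ + 2*C)^2 * (s^2 + t^2 + u^2) := by
  have hKC : 0 ≤ κ * C := mul_nonneg hκ hC
  have hCC : 0 ≤ C * C := mul_nonneg hC hC
  rcases ha with rfl | rfl <;> rcases hb with rfl | rfl <;> rcases hd with rfl | rfl <;>
    nlinarith [mul_nonneg hKC (sq_nonneg (s-t)), mul_nonneg hKC (sq_nonneg (s+t)),
      mul_nonneg hKC (sq_nonneg (s-u)), mul_nonneg hKC (sq_nonneg (s+u)),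
      mul_nonneg hKC (sq_nonneg (t-u)), mul_nonneg hKC (sq_nonneg (t+u)),
      mul_nonneg hCC (sq_nonneg (s-t)), mul_nonneg hCC (sq_nonneg (s+t)),
      mul_nonneg hCC (sq_nonneg (s-u)), mul_nonneg hCC (sq_nonneg (s+u)),
      mul_nonneg hCC (sq_nonneg (t-u)), mul_nonneg hCC (sq_nonneg (t+u))]

lemma triple_norm_le {n k : ℕ} (F : TwoUniformFrame n k) (S : Finset (Fin n))
    (hS3 : S.card = 3) :
    opNorm (F.Vᵀ * diagS S * F.V) ≤ (k : ℝ) / n + 2 * c n k := by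
  obtain ⟨p, q, r, hpq, hpr, hqr, hS⟩ := Finset.card_eq_three.mp hS3
  have hκ : (0:ℝ) ≤ (k:ℝ)/n := by positivity
  have hc : 0 ≤ c n k := c_nonneg n k
  have hβ : (0:ℝ) ≤ (k:ℝ)/n + 2 * c n k := by linarith
  rw [normM_eq_normN, ← opNorm_eq_l2]
  refine opNorm_le_of_sq_sum _ _ hβ fun x => ?_
  rw [sum_sq_N F hpq hpr hqr hS x]
  have hsub : (x p)^2 + (x q)^2 + (x r)^2 ≤ ∑ i, (x i)^2 := by
    have h1 : ∑ i ∈ ({p, q, r} : Finset (Fin n)), (x i)^2 = (x p)^2 + (x q)^2 + (x r)^2 := by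
      rw [Finset.sum_insert (by simp [hpq, hpr]), Finset.sum_insert (by simp [hqr]),
        Finset.sum_singleton, add_assoc]
    rw [← h1]
    exact Finset.sum_le_sum_of_subset_of_nonneg (Finset.subset_univ _)
      (fun i _ _ => sq_nonneg _)
  have key : ((k / n : ℝ) * x p + c n k * (F.Q p p * x p + F.Q p q * x q + F.Q p r * x r))^2
      + ((k / n : ℝ) * x q + c n k * (F.Q q p * x p + F.Q q q * x q + F.Q q r * x r))^2
      + ((k / n : ℝ) * x r + c n k * (F.Q r p * x p + F.Q r q * x q + F.Q r r * x r))^2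
      ≤ ((k : ℝ)/n + 2 * c n k)^2 * ((x p)^2 + (x q)^2 + (x r)^2) := by
    rw [F.diag p, F.diag q, F.diag r, Qsymm F q p, Qsymm F r p, Qsymm F r q]
    exact key_ineq_s7 _ _ _ _ _ _ _ _ hκ hc (F.offdiag p q hpq) (F.offdiag p r hpr)
      (F.offdiag q r hqr)
  calc _ ≤ ((k : ℝ)/n + 2 * c n k)^2 * ((x p)^2 + (x q)^2 + (x r)^2) := key
    _ ≤ ((k : ℝ)/n + 2 * c n k)^2 * ∑ i, (x i)^2 :=
        mul_le_mul_of_nonneg_left hsub (sq_nonneg _)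

lemma eig_transfer {n k : ℕ} (F : TwoUniformFrame n k) (S : Finset (Fin n)) (μ : ℝ)
    (hμ : 0 < μ) (w : Fin n → ℝ) (hw0 : w ≠ 0) (hwd : diagS S *ᵥ w = w)
    (hNw : (diagS S * (F.V * F.Vᵀ) * diagS S) *ᵥ w = μ • w) :
    μ ≤ opNorm (F.Vᵀ * diagS S * F.V) := by
  set y := F.Vᵀ *ᵥ w with hydef
  have hMy : (F.Vᵀ * diagS S * F.V) *ᵥ y = μ • y := by
    rw [hydef, Matrix.mulVec_mulVec]
    conv_lhs => rw [← hwd]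
    rw [Matrix.mulVec_mulVec]
    have hmm : F.Vᵀ * diagS S * F.V * F.Vᵀ * diagS S
        = F.Vᵀ * (diagS S * (F.V * F.Vᵀ) * diagS S) := by
      simp only [Matrix.mul_assoc]
    rw [hmm, ← Matrix.mulVec_mulVec, hNw, Matrix.mulVec_smul]
  have hy0 : y ≠ 0 := by
    intro h0
    have hVy : (F.V * F.Vᵀ) *ᵥ w = 0 := by
      rw [← Matrix.mulVec_mulVec, ← hydef, h0, Matrix.mulVec_zero]
    have hN0 : (diagS S * (F.V * F.Vᵀ) * diagS S) *ᵥ w = 0 := by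
      rw [← Matrix.mulVec_mulVec, hwd, ← Matrix.mulVec_mulVec, hVy, Matrix.mulVec_zero]
    rw [hNw] at hN0
    exact hw0 (by simpa [smul_eq_zero, hμ.ne'] using hN0)
  exact le_opNorm_of_eig _ μ hμ.le y hy0 hMy

lemma kn_pos {n k : ℕ} (hk : 1 ≤ k) (hn : 0 < n) : (0:ℝ) < (k:ℝ)/n := by
  have h1 : (0:ℝ) < k := by exact_mod_cast hk
  have h2 : (0:ℝ) < n := by exact_mod_cast hn
  positivity

lemma even_lower {n k : ℕ} (F : TwoUniformFrame n k) (hk : 1 ≤ k) {S : Finset (Fin n)}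
    {p q r : Fin n} (hpq : p ≠ q) (hpr : p ≠ r) (hqr : q ≠ r) (hS : S = {p, q, r})
    (hprod : F.Q p q * F.Q p r * F.Q q r = 1) :
    (k : ℝ)/n + 2 * c n k ≤ opNorm (F.Vᵀ * diagS S * F.V) := by
  have hκ : (0:ℝ) < (k:ℝ)/n := kn_pos hk p.pos
  have hc := c_nonneg n k
  have hμ : (0:ℝ) < (k:ℝ)/n + 2 * c n k := by linarith
  set a := F.Q p q with hadef
  set b := F.Q p r with hbdef
  have ha : a * a = 1 := Qsq F hpq
  have hb : b * b = 1 := Qsq F hpr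
  have hd : F.Q q r * F.Q q r = 1 := Qsq F hqr
  have hdb : F.Q q r * b = a := by linear_combination a * hprod - b * F.Q q r * ha
  have had : a * F.Q q r = b := by linear_combination b * hprod - a * F.Q q r * hb
  set w : Fin n → ℝ := fun i => if i = p then 1 else if i = q then a else if i = r then b else 0
    with hwdef
  have hwp : w p = 1 := by simp [hwdef]
  have hwq : w q = a := by simp [hwdef, hpq.symm]
  have hwr : w r = b := by simp [hwdef, hpr.symm, hqr.symm]
  have hw0 : w ≠ 0 := fun h => by simpa [hwp] using congrFun h p
  have hwd : diagS S *ᵥ w = w := by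
    funext i
    rw [show (diagS S *ᵥ w) i = (if i ∈ S then (1:ℝ) else 0) * w i from
      Matrix.mulVec_diagonal _ _ _]
    by_cases h : i ∈ S
    · rw [if_pos h, one_mul]
    · have h1 : i ≠ p ∧ i ≠ q ∧ i ≠ r := by
        rw [hS] at h; simpa using h
      rw [if_neg h, zero_mul, hwdef]
      simp [h1.1, h1.2.1, h1.2.2]
  refine eig_transfer F S _ hμ w hw0 hwd ?_
  funext i
  rw [mulVec_N F hpq hpr hqr hS w i, hwp, hwq, hwr]
  by_cases hip : i = p
  · subst hip
    have : i ∈ S := by rw [hS]; simp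
    rw [if_pos this, Pi.smul_apply, hwp, F.diag, smul_eq_mul]
    nlinarith [ha, hb]
  · by_cases hiq : i = q
    · subst hiq
      have : i ∈ S := by rw [hS]; simp
      rw [if_pos this, Pi.smul_apply, hwq, F.diag, smul_eq_mul, Qsymm F i p]
      nlinarith [hdb]
    · by_cases hir : i = r
      · subst hir
        have : i ∈ S := by rw [hS]; simp
        rw [if_pos this, Pi.smul_apply, hwr, F.diag, smul_eq_mul, Qsymm F i p, Qsymm F i q]
        nlinarith [had]
      · have : i ∉ S := by rw [hS]; simp [hip, hiq, hir]
        rw [if_neg this, Pi.smul_apply, smul_eq_mul, hwdef]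
        simp [hip, hiq, hir]

lemma odd_lower {n k : ℕ} (F : TwoUniformFrame n k) (hk : 1 ≤ k) {S : Finset (Fin n)}
    {p q r : Fin n} (hpq : p ≠ q) (hpr : p ≠ r) (hqr : q ≠ r) (hS : S = {p, q, r})
    (hprod : F.Q p q * F.Q p r * F.Q q r = -1) :
    (k : ℝ)/n + c n k ≤ opNorm (F.Vᵀ * diagS S * F.V) := by
  have hκ : (0:ℝ) < (k:ℝ)/n := kn_pos hk p.pos
  have hc := c_nonneg n k
  have hμ : (0:ℝ) < (k:ℝ)/n + c n k := by linarith
  set a := F.Q p q with hadef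
  set b := F.Q p r with hbdef
  have ha : a * a = 1 := Qsq F hpq
  have hb : b * b = 1 := Qsq F hpr
  have hdab : F.Q q r = -(a * b) := by
    linear_combination (a*b) * hprod - F.Q q r * b * b * ha - F.Q q r * hb
  set w : Fin n → ℝ := fun i => if i = p then -a else if i = q then -1 else 0 with hwdef
  have hwp : w p = -a := by simp [hwdef]
  have hwq : w q = -1 := by simp [hwdef, hpq.symm]
  have hwr : w r = 0 := by simp [hwdef, hpr.symm, hqr.symm]
  have hw0 : w ≠ 0 := fun h => by simpa [hwq] using congrFun h q
  have hwd : diagS S *ᵥ w = w := by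
    funext i
    rw [show (diagS S *ᵥ w) i = (if i ∈ S then (1:ℝ) else 0) * w i from
      Matrix.mulVec_diagonal _ _ _]
    by_cases h : i ∈ S
    · rw [if_pos h, one_mul]
    · have h1 : i ≠ p ∧ i ≠ q ∧ i ≠ r := by
        rw [hS] at h; simpa using h
      rw [if_neg h, zero_mul, hwdef]
      simp [h1.1, h1.2.1]
  refine eig_transfer F S _ hμ w hw0 hwd ?_
  funext i
  rw [mulVec_N F hpq hpr hqr hS w i, hwp, hwq, hwr]
  by_cases hip : i = p
  · subst hip
    have : i ∈ S := by rw [hS]; simp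
    rw [if_pos this, Pi.smul_apply, hwp, F.diag, smul_eq_mul]
    ring
  · by_cases hiq : i = q
    · subst hiq
      have : i ∈ S := by rw [hS]; simp
      rw [if_pos this, Pi.smul_apply, hwq, F.diag, smul_eq_mul, Qsymm F i p]
      nlinarith [ha]
    · by_cases hir : i = r
      · subst hir
        have : i ∈ S := by rw [hS]; simp
        rw [if_pos this, Pi.smul_apply, hwr, F.diag, smul_eq_mul, Qsymm F i p, Qsymm F i q]
        nlinarith [hdab]
      · have : i ∉ S := by rw [hS]; simp [hip, hiq, hir]
        rw [if_neg this, Pi.smul_apply, smul_eq_mul, hwdef]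
        simp [hip, hiq, hir]

lemma gram_idem {n k : ℕ} (F : TwoUniformFrame n k) :
    (F.V * F.Vᵀ) * (F.V * F.Vᵀ) = F.V * F.Vᵀ := by
  calc (F.V * F.Vᵀ) * (F.V * F.Vᵀ) = F.V * (F.Vᵀ * F.V * F.Vᵀ) := by
        simp only [Matrix.mul_assoc]
    _ = F.V * F.Vᵀ := by rw [F.parseval, Matrix.one_mul]

lemma gram_symm {n k : ℕ} (F : TwoUniformFrame n k) :
    (F.V * F.Vᵀ)ᵀ = F.V * F.Vᵀ := by
  rw [Matrix.transpose_mul, Matrix.transpose_transpose]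

lemma norm_le_one {n k : ℕ} (F : TwoUniformFrame n k) (S : Finset (Fin n)) :
    opNorm (F.Vᵀ * diagS S * F.V) ≤ 1 := by
  rw [normM_eq_normN, ← opNorm_eq_l2]
  refine opNorm_le_of_sq_sum _ _ zero_le_one fun x => ?_
  set G := F.V * F.Vᵀ with hGdef
  set y := diagS S *ᵥ x with hydef
  set z := G *ᵥ y with hzdef
  have hout : (diagS S * G * diagS S) *ᵥ x = diagS S *ᵥ z := by
    rw [hzdef, hydef, Matrix.mulVec_mulVec, Matrix.mulVec_mulVec]
  rw [hout]
  have step1 : ∑ i, ((diagS S *ᵥ z) i)^2 ≤ ∑ i, (z i)^2 := by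
    refine Finset.sum_le_sum fun i _ => ?_
    rw [show (diagS S *ᵥ z) i = (if i ∈ S then (1:ℝ) else 0) * z i from
      Matrix.mulVec_diagonal _ _ _]
    by_cases h : i ∈ S <;> simp [h, sq_nonneg]
  have hzz : z ⬝ᵥ z = z ⬝ᵥ y := by
    conv_lhs => rw [hzdef, Matrix.dotProduct_mulVec]
    have hGs : Gᵀ = G := by rw [hGdef]; exact gram_symm F
    have hGi : G * G = G := by rw [hGdef]; exact gram_idem F
    have h1 : z ᵥ* G = G *ᵥ z := by
      conv_lhs => rw [← hGs]
      rw [Matrix.vecMul_transpose]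
    have h2 : G *ᵥ z = z := by
      rw [hzdef, Matrix.mulVec_mulVec, hGi]
    rw [h1, h2]
  have step2 : ∑ i, (z i)^2 ≤ ∑ i, (y i)^2 := by
    have hCS := Finset.sum_mul_sq_le_sq_mul_sq Finset.univ z y
    have hB0 : (0:ℝ) ≤ ∑ i, (y i)^2 := Finset.sum_nonneg fun i _ => sq_nonneg _
    have hA0 : (0:ℝ) ≤ ∑ i, (z i)^2 := Finset.sum_nonneg fun i _ => sq_nonneg _
    have heq : (∑ i, z i * y i) = ∑ i, (z i)^2 := by
      have h3 : (∑ i, z i * y i) = z ⬝ᵥ y := rfl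
      have h4 : z ⬝ᵥ z = ∑ i, (z i)^2 := by simp [dotProduct, sq]
      rw [h3, ← hzz, h4]
    rw [heq] at hCS
    by_cases hz0 : ∑ i, (z i)^2 = 0
    · rw [hz0]; exact hB0
    · have hApos : 0 < ∑ i, (z i)^2 := lt_of_le_of_ne hA0 (Ne.symm hz0)
      refine le_of_mul_le_mul_left ?_ hApos
      calc (∑ i, (z i)^2) * (∑ i, (z i)^2) = (∑ i, (z i)^2)^2 := (pow_two _).symm
        _ ≤ (∑ i, (z i)^2) * (∑ i, (y i)^2) := hCS
  have step3 : ∑ i, (y i)^2 ≤ ∑ i, (x i)^2 := by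
    refine Finset.sum_le_sum fun i _ => ?_
    rw [hydef, show (diagS S *ᵥ x) i = (if i ∈ S then (1:ℝ) else 0) * x i from
      Matrix.mulVec_diagonal _ _ _]
    by_cases h : i ∈ S <;> simp [h, sq_nonneg]
  calc ∑ i, ((diagS S *ᵥ z) i)^2 ≤ ∑ i, (z i)^2 := step1
    _ ≤ ∑ i, (y i)^2 := step2
    _ ≤ ∑ i, (x i)^2 := step3
    _ ≤ 1^2 * ∑ i, (x i)^2 := by rw [one_pow, one_mul]

lemma frameGraph_adj {n k : ℕ} (F : TwoUniformFrame n k) (i j : Fin n) :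
    (frameGraph F).Adj i j ↔ i ≠ j ∧ F.Q i j = -1 := Iff.rfl

lemma seidel_frameGraph {n k : ℕ} (F : TwoUniformFrame n k) (i j : Fin n) :
    seidel (frameGraph F) i j = F.Q i j := by
  rcases eq_or_ne i j with rfl | h
  · simp [seidel, (F.diag i).symm]
  · rcases F.offdiag i j h with h1 | h1
    · have hadj : ¬ (frameGraph F).Adj i j := by
        rw [frameGraph_adj]
        rintro ⟨-, h2⟩
        rw [h2] at h1; norm_num at h1
      simp [seidel, h, hadj, h1]
    · have hadj : (frameGraph F).Adj i j := (frameGraph_adj F i j).mpr ⟨h, h1⟩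
      simp [seidel, h, hadj, h1]

lemma mulVec_G_pair {n k : ℕ} (F : TwoUniformFrame n k) {z z' : Fin n} (hzz : z ≠ z')
    (v : Fin n → ℝ) (hsupp : ∀ j, j ≠ z → j ≠ z' → v j = 0) (i : Fin n) :
    ((F.V * F.Vᵀ) *ᵥ v) i
      = (k / n : ℝ) * v i + c n k * (F.Q i z * v z + F.Q i z' * v z') := by
  rw [F.gram, Matrix.add_mulVec, Matrix.smul_mulVec, Matrix.smul_mulVec,
    Matrix.one_mulVec]
  have hQ : (F.Q *ᵥ v) i = ∑ j, F.Q i j * v j := rfl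
  have hsum : ∑ j, F.Q i j * v j = F.Q i z * v z + F.Q i z' * v z' := by
    have hz : ∀ j ∈ Finset.univ, j ∉ ({z, z'} : Finset (Fin n)) → F.Q i j * v j = 0 := by
      intro j _ hj
      simp only [Finset.mem_insert, Finset.mem_singleton] at hj
      push_neg at hj
      rw [hsupp j hj.1 hj.2, mul_zero]
    rw [← Finset.sum_subset (Finset.subset_univ _) hz,
      Finset.sum_insert (by simp [hzz]), Finset.sum_singleton]
  simp only [Pi.add_apply, Pi.smul_apply, smul_eq_mul, hQ, hsum]

lemma all_odd_case {n k : ℕ} (F : TwoUniformFrame n k) (hk : 1 ≤ k) (hkn : k < n)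
    (Hodd : ∀ p q r : Fin n, p ≠ q → p ≠ r → q ≠ r → F.Q p q * F.Q p r * F.Q q r = -1) :
    SwitchingEquivalent (frameGraph F) (⊤ : SimpleGraph (Fin n)) ∧ k = n - 1 := by
  have hn2 : 2 ≤ n := by omega
  obtain ⟨z, z', hzz⟩ : ∃ a b : Fin n, a ≠ b := by
    refine Fintype.exists_pair_of_one_lt_card ?_
    simp only [Fintype.card_fin]
    omega
  set ε : Fin n → ℝ := fun i => if i = z then 1 else -F.Q z i with hεdef
  have hε1 : ∀ i, ε i = 1 ∨ ε i = -1 := by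
    intro i
    by_cases h : i = z
    · left; simp [hεdef, h]
    · rcases F.offdiag z i (fun hh => h hh.symm) with h1 | h1
      · right; simp [hεdef, h, h1]
      · left; simp [hεdef, h, h1]
  have hQε : ∀ i j, i ≠ j → F.Q i j = -(ε i * ε j) := by
    intro i j hij
    by_cases hi : i = z
    · subst hi
      simp only [hεdef, if_pos, if_true]
      rw [if_neg (Ne.symm hij)]
      simp
    · by_cases hj : j = z
      · subst hj
        rw [Qsymm F i j]
        simp only [hεdef, if_pos, if_true]
        rw [if_neg hi]
        simp
      · have h0 := Hodd z i j (fun hh => hi hh.symm) (fun hh => hj hh.symm) hij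
        have hzi : F.Q z i * F.Q z i = 1 := Qsq F (fun hh => hi hh.symm)
        have hzj : F.Q z j * F.Q z j = 1 := Qsq F (fun hh => hj hh.symm)
        have hval : F.Q i j = -(F.Q z i * F.Q z j) := by
          linear_combination (F.Q z i * F.Q z j) * h0
            - (F.Q i j * F.Q z j * F.Q z j) * hzi - F.Q i j * hzj
        simp only [hεdef]
        rw [if_neg hi, if_neg hj, hval]
        ring
  have hnR : (0:ℝ) < n := by exact_mod_cast (by omega : 0 < n)
  constructor
  · refine ⟨Equiv.refl _, ε, hε1, fun i j => ?_⟩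
    rcases eq_or_ne i j with rfl | hij
    · simp [seidel]
    · have hsT : seidel (⊤ : SimpleGraph (Fin n)) i j = -1 := by
        simp [seidel, hij]
      rw [hsT, Equiv.refl_apply, Equiv.refl_apply, seidel_frameGraph F, hQε i j hij]
      rcases hε1 i with h1 | h1 <;> rcases hε1 j with h2 | h2 <;> rw [h1, h2] <;> norm_num
  · -- k = n - 1
    set κ := (k : ℝ)/n with hκdef
    set C := c n k with hCdef
    set v : Fin n → ℝ := fun i => if i = z then -(ε z') else if i = z' then 1 else 0 with hvdef
    have hvz : v z = -(ε z') := by simp [hvdef]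
    have hvz' : v z' = 1 := by simp [hvdef, hzz.symm]
    have hsupp : ∀ j, j ≠ z → j ≠ z' → v j = 0 := by
      intro j h1 h2; simp [hvdef, h1, h2]
    have hεz : ε z = 1 := by simp [hεdef]
    have hεsq : ε z' * ε z' = 1 := by rcases hε1 z' with h | h <;> rw [h] <;> norm_num
    have hGv : (F.V * F.Vᵀ) *ᵥ v = (κ + C) • v := by
      funext i
      rw [mulVec_G_pair F hzz v hsupp i, hvz, hvz', Pi.smul_apply, smul_eq_mul]
      by_cases hi : i = z
      · subst hi
        rw [hvz, hQε i z' (hzz), hεz, F.diag]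
        linear_combination (ε z' : ℝ) * hCdef
      · by_cases hi' : i = z'
        · subst hi'
          rw [hvz', hQε i z (hzz.symm), hεz, F.diag]
          linear_combination c n k * hεsq - hCdef
        · rw [hsupp i hi hi', hQε i z hi, hQε i z' hi', hεz]
          ring
    have hGGv : ((κ + C)*(κ + C)) • v = (κ + C) • v := by
      have h2 : (F.V * F.Vᵀ) *ᵥ ((F.V * F.Vᵀ) *ᵥ v) = ((κ + C)*(κ + C)) • v := by
        rw [hGv, Matrix.mulVec_smul, hGv, smul_smul]
      have h3 : (F.V * F.Vᵀ) *ᵥ ((F.V * F.Vᵀ) *ᵥ v) = (κ + C) • v := by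
        rw [Matrix.mulVec_mulVec, gram_idem F, hGv]
      rw [← h2, h3]
    have hsq : (κ + C)*(κ + C) = κ + C := by
      have := congrFun hGGv z'
      simpa [Pi.smul_apply, hvz'] using this
    have hμpos : 0 < κ + C := by
      have h1 : 0 < κ := kn_pos hk (by omega)
      have h2 : 0 ≤ C := hCdef ▸ c_nonneg n k
      linarith
    have hμ1 : κ + C = 1 := by
      have h0 : (κ + C) * ((κ + C) - 1) = 0 := by linear_combination hsq
      rcases mul_eq_zero.mp h0 with h1 | h1
      · exact absurd h1 hμpos.ne'
      · linarith
    have hCval : C = 1 - κ := by linarith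
    have hn1 : (1:ℝ) ≤ (n:ℝ) - 1 := by
      have h1 : (2:ℝ) ≤ n := by exact_mod_cast hn2
      linarith
    have hnk : (1:ℝ) ≤ (n:ℝ) - k := by
      have h1 : (k:ℝ) + 1 ≤ n := by exact_mod_cast hkn
      linarith
    have harg : 0 ≤ (k:ℝ)*((n:ℝ)-k)/((n:ℝ)^2*((n:ℝ)-1)) := by
      apply div_nonneg
      · exact mul_nonneg (Nat.cast_nonneg k) (by linarith)
      · exact mul_nonneg (sq_nonneg _) (by linarith)
    have hc2 : C^2 = (k:ℝ)*((n:ℝ)-k)/((n:ℝ)^2*((n:ℝ)-1)) := by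
      rw [hCdef]
      exact Real.sq_sqrt harg
    have hden : ((n:ℝ)^2*((n:ℝ)-1)) ≠ 0 :=
      ne_of_gt (mul_pos (pow_pos hnR 2) (by linarith))
    have e3 : (1 - κ)^2 * ((n:ℝ)^2*((n:ℝ)-1)) = (k:ℝ)*((n:ℝ)-k) := by
      rw [← hCval, hc2]
      exact div_mul_cancel₀ _ hden
    have e2 : ((n:ℝ)-k)^2*((n:ℝ)-1) = (1-κ)^2 * ((n:ℝ)^2*((n:ℝ)-1)) := by
      rw [hκdef]
      field_simp
    have key : ((n:ℝ)-k)^2*((n:ℝ)-1) = (k:ℝ)*((n:ℝ)-k) := by rw [e2, e3]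
    have h7 : ((n:ℝ)-k) * ((n:ℝ)*((n:ℝ)-1-k)) = 0 := by linear_combination key
    have hkR : (k:ℝ) = (n:ℝ) - 1 := by
      rcases mul_eq_zero.mp h7 with h1 | h1
      · linarith
      · rcases mul_eq_zero.mp h1 with h2 | h2
        · exact absurd h2 hnR.ne'
        · linarith
    have hfin : ((k+1:ℕ):ℝ) = ((n:ℕ):ℝ) := by push_cast; linarith
    have := Nat.cast_inj (R := ℝ).mp hfin
    omega

lemma even_bipartite {n k : ℕ} (F : TwoUniformFrame n k) {p q r : Fin n}
    (hpq : p ≠ q) (hpr : p ≠ r) (hqr : q ≠ r)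
    (hprod : F.Q p q * F.Q p r * F.Q q r = 1) :
    HasInducedCompleteBipartite (frameGraph F) 3 := by
  refine ⟨{p, q, r}, ?_, ?_⟩
  · rw [Finset.card_insert_of_notMem (by simp [hpq, hpr]),
      Finset.card_insert_of_notMem (by simp [hqr]), Finset.card_singleton]
  · set η : Fin n → ℝ := fun i => if i = p then 1 else if i = q then F.Q p q else F.Q p r
      with hηdef
    have hηp : η p = 1 := by simp [hηdef]
    have hηq : η q = F.Q p q := by simp [hηdef, hpq.symm]
    have hηr : η r = F.Q p r := by simp [hηdef, hpr.symm, hqr.symm]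
    have ha : F.Q p q * F.Q p q = 1 := Qsq F hpq
    have hb : F.Q p r * F.Q p r = 1 := Qsq F hpr
    have hqr' : F.Q q r = F.Q p q * F.Q p r := by
      linear_combination (F.Q p q * F.Q p r) * hprod
        - (F.Q q r * F.Q p r * F.Q p r) * ha - F.Q q r * hb
    have hη1 : ∀ i, i ∈ ({p, q, r} : Finset (Fin n)) → η i = 1 ∨ η i = -1 := by
      intro i hi
      rcases (by simpa using hi : i = p ∨ i = q ∨ i = r) with h | h | h <;> rw [h]
      · left; exact hηp
      · rw [hηq]; exact F.offdiag p q hpq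
      · rw [hηr]; exact F.offdiag p r hpr
    have hQη : ∀ i j : Fin n, i ∈ ({p, q, r} : Finset (Fin n)) →
        j ∈ ({p, q, r} : Finset (Fin n)) → i ≠ j → F.Q i j = η i * η j := by
      intro i j hi hj hij
      rcases (by simpa using hi : i = p ∨ i = q ∨ i = r) with h | h | h <;>
        rcases (by simpa using hj : j = p ∨ j = q ∨ j = r) with h' | h' | h' <;>
        rw [h, h']
      · exact absurd (h.trans h'.symm) hij
      · rw [hηp, hηq]; ring
      · rw [hηp, hηr]; ring
      · rw [hηp, hηq, Qsymm F q p]; ring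
      · exact absurd (h.trans h'.symm) hij
      · rw [hηq, hηr]; exact hqr'
      · rw [hηp, hηr, Qsymm F r p]; ring
      · rw [hηq, hηr, Qsymm F r q]; linear_combination hqr'
      · exact absurd (h.trans h'.symm) hij
    refine ⟨{v | η v.val = -1}, fun i j => ?_⟩
    have hmi : (i : Fin n) ∈ ({p, q, r} : Finset (Fin n)) := by
      have := i.2
      simpa using this
    have hmj : (j : Fin n) ∈ ({p, q, r} : Finset (Fin n)) := by
      have := j.2
      simpa using this
    by_cases hv : (i : Fin n) = (j : Fin n)
    · have hij : i = j := Subtype.ext hv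
      subst hij
      simp
    · have hadj : ((frameGraph F).induce (({p, q, r} : Finset (Fin n)) : Set (Fin n))).Adj i j
          ↔ ((i : Fin n) ≠ (j : Fin n) ∧ F.Q i j = -1) := by
        rw [SimpleGraph.comap_adj]
        exact frameGraph_adj F _ _
      rw [hadj, hQη (i : Fin n) (j : Fin n) hmi hmj hv]
      simp only [Set.mem_setOf_eq]
      rcases hη1 _ hmi with h1 | h1 <;> rcases hη1 _ hmj with h2 | h2 <;>
        rw [h1, h2] <;> norm_num [hv]

lemma prod_pm {n k : ℕ} (F : TwoUniformFrame n k) {p q r : Fin n}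
    (hpq : p ≠ q) (hpr : p ≠ r) (hqr : q ≠ r) :
    F.Q p q * F.Q p r * F.Q q r = 1 ∨ F.Q p q * F.Q p r * F.Q q r = -1 := by
  rcases F.offdiag p q hpq with h1 | h1 <;> rcases F.offdiag p r hpr with h2 | h2 <;>
    rcases F.offdiag q r hqr with h3 | h3 <;> rw [h1, h2, h3] <;> norm_num

lemma c_eq_inv_n {n k : ℕ} (hk1 : k = n - 1) (hn : 2 ≤ n) : c n k = 1/n := by
  have hnR : (0:ℝ) < n := by exact_mod_cast (by omega : 0 < n)
  have hkR : (k:ℝ) = (n:ℝ) - 1 := by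
    rw [hk1, Nat.cast_sub (by omega : 1 ≤ n), Nat.cast_one]
  have hn1 : (1:ℝ) ≤ (n:ℝ) - 1 := by
    have h2 : (2:ℝ) ≤ n := by exact_mod_cast hn
    linarith
  have hc0 : c n k = Real.sqrt ((k : ℝ) * ((n : ℝ) - k) / ((n : ℝ) ^ 2 * ((n : ℝ) - 1))) := rfl
  have harg : (k : ℝ) * ((n : ℝ) - k) / ((n : ℝ) ^ 2 * ((n : ℝ) - 1)) = (1/n)^2 := by
    rw [hkR]
    have hne : ((n:ℝ) - 1) ≠ 0 := by linarith
    field_simp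
    ring
  rw [hc0, harg, Real.sqrt_sq (by positivity)]

lemma triple_card {n : ℕ} {p q r : Fin n} (hpq : p ≠ q) (hpr : p ≠ r) (hqr : q ≠ r) :
    ({p, q, r} : Finset (Fin n)).card = 3 := by
  rw [Finset.card_insert_of_notMem (by simp [hpq, hpr]),
    Finset.card_insert_of_notMem (by simp [hqr]), Finset.card_singleton]

lemma errInf_eq_of_lt {n k : ℕ} (F : TwoUniformFrame n k) (hk : 1 ≤ k) (hkn : k < n)
    (hlt : k < n - 1) : errInf F.V 3 = (k : ℝ) / n + 2 * c n k := by
  have hP : ∃ p q r : Fin n, p ≠ q ∧ p ≠ r ∧ q ≠ r ∧ F.Q p q * F.Q p r * F.Q q r = 1 := by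
    by_contra hnP
    push_neg at hnP
    have Hodd : ∀ p q r : Fin n, p ≠ q → p ≠ r → q ≠ r →
        F.Q p q * F.Q p r * F.Q q r = -1 := by
      intro p q r h1 h2 h3
      rcases prod_pm F h1 h2 h3 with h | h
      · exact absurd h (hnP p q r h1 h2 h3)
      · exact h
    have := (all_odd_case F hk hkn Hodd).2
    omega
  obtain ⟨p, q, r, hpq, hpr, hqr, hprod⟩ := hP
  have hcard : ({p, q, r} : Finset (Fin n)).card = 3 := triple_card hpq hpr hqr
  have hval : opNorm (F.Vᵀ * diagS {p, q, r} * F.V) = (k:ℝ)/n + 2 * c n k :=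
    le_antisymm (triple_norm_le F _ hcard) (even_lower F hk hpq hpr hqr rfl hprod)
  refine IsGreatest.csSup_eq ⟨⟨{p, q, r}, hcard, hval.symm⟩, ?_⟩
  rintro x ⟨S, hS, rfl⟩
  exact triple_norm_le F S hS

lemma errInf_eq_one {n k : ℕ} (F : TwoUniformFrame n k) (hk : 1 ≤ k) (hkn : k < n)
    (hk1 : k = n - 1) (hn3 : 3 ≤ n) : errInf F.V 3 = 1 := by
  have hn2 : 2 ≤ n := by omega
  have hcval : c n k = 1/n := c_eq_inv_n hk1 hn2
  have hnR : (0:ℝ) < n := by exact_mod_cast (by omega : 0 < n)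
  have hkR : (k:ℝ) = (n:ℝ) - 1 := by
    rw [hk1, Nat.cast_sub (by omega : 1 ≤ n), Nat.cast_one]
  have hκ : (k:ℝ)/n + 1/n = 1 := by
    rw [hkR]
    rw [← add_div, sub_add_cancel, div_self hnR.ne']
  have Hodd : ∀ p q r : Fin n, p ≠ q → p ≠ r → q ≠ r →
      F.Q p q * F.Q p r * F.Q q r = -1 := by
    intro p q r h1 h2 h3
    rcases prod_pm F h1 h2 h3 with h | h
    · exfalso
      have hlow := even_lower F hk h1 h2 h3 rfl h
      have hup := norm_le_one F {p, q, r}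
      rw [hcval] at hlow
      have h5 : (k:ℝ)/n + 2 * (1/n) ≤ 1 := le_trans hlow hup
      rw [hkR] at h5
      have h6 : 0 < 1/(n:ℝ) := by positivity
      have h7 : ((n:ℝ) - 1)/n = 1 - 1/n := by field_simp
      rw [h7] at h5
      linarith
    · exact h
  have hval : ∀ S : Finset (Fin n), S.card = 3 → opNorm (F.Vᵀ * diagS S * F.V) = 1 := by
    intro S hS
    obtain ⟨p, q, r, h1, h2, h3, hSe⟩ := Finset.card_eq_three.mp hS
    refine le_antisymm (norm_le_one F S) ?_
    have hlow := odd_lower F hk h1 h2 h3 hSe (Hodd p q r h1 h2 h3)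
    rw [hcval] at hlow
    calc (1:ℝ) = (k:ℝ)/n + 1/n := hκ.symm
      _ ≤ _ := hlow
  obtain ⟨S₀, -, hS₀⟩ := Finset.exists_subset_card_eq
    (show 3 ≤ (Finset.univ : Finset (Fin n)).card by
      rw [Finset.card_univ, Fintype.card_fin]; omega)
  refine IsGreatest.csSup_eq ⟨⟨S₀, hS₀, (hval S₀ hS₀).symm⟩, ?_⟩
  rintro x ⟨S, hS, rfl⟩
  exact le_of_eq (hval S hS)

lemma errSet_empty {n k : ℕ} (hn : n < 3) (V : Matrix (Fin n) (Fin k) ℝ) :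
    {x : ℝ | ∃ S : Finset (Fin n), S.card = 3 ∧ x = opNorm (Vᵀ * diagS S * V)} = ∅ := by
  ext x
  simp only [Set.mem_setOf_eq, Set.mem_empty_iff_false, iff_false, not_exists]
  rintro S ⟨hS, -⟩
  have h1 := Finset.card_le_univ S
  rw [Fintype.card_fin, hS] at h1
  omega

theorem statement7 (n k : ℕ) (hk : 1 ≤ k) (hkn : k < n) (F : TwoUniformFrame n k) :
    (HasInducedCompleteBipartite (frameGraph F) 3 ∨
      (SwitchingEquivalent (frameGraph F) (⊤ : SimpleGraph (Fin n)) ∧ k = n - 1)) ∧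
    (k < n - 1 → errInf F.V 3 = (k : ℝ) / n + 2 * c n k) ∧
    (∀ F' : TwoUniformFrame n k, errInf F.V 3 = errInf F'.V 3) := by
  refine ⟨?_, ?_, ?_⟩
  · by_cases hP : ∃ p q r : Fin n, p ≠ q ∧ p ≠ r ∧ q ≠ r ∧ F.Q p q * F.Q p r * F.Q q r = 1
    · obtain ⟨p, q, r, h1, h2, h3, hprod⟩ := hP
      exact Or.inl (even_bipartite F h1 h2 h3 hprod)
    · push_neg at hP
      have Hodd : ∀ p q r : Fin n, p ≠ q → p ≠ r → q ≠ r →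
          F.Q p q * F.Q p r * F.Q q r = -1 := by
        intro p q r h1 h2 h3
        rcases prod_pm F h1 h2 h3 with h | h
        · exact absurd h (hP p q r h1 h2 h3)
        · exact h
      exact Or.inr (all_odd_case F hk hkn Hodd)
  · intro hlt
    exact errInf_eq_of_lt F hk hkn hlt
  · intro F'
    by_cases hlt : k < n - 1
    · rw [errInf_eq_of_lt F hk hkn hlt, errInf_eq_of_lt F' hk hkn hlt]
    · have hk1 : k = n - 1 := by omega
      by_cases hn3 : 3 ≤ n
      · rw [errInf_eq_one F hk hkn hk1 hn3, errInf_eq_one F' hk hkn hk1 hn3]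
      · have hn2 : n < 3 := by omega
        rw [errInf, errInf, errSet_empty hn2 F.V, errSet_empty hn2 F'.V]

end FramesErasures
end
end

section
/- Let m ≥ 3 and s ≥ 1. Let Q⁽⁰⁾, Q⁽¹⁾, Q⁽ˢ⁾ be Seidel adjacency matrices of graphs on m vertices belonging to 𝒢_m^(0), 𝒢_m^(1), and 𝒢_m^(s) respectively, and let λ⁽⁰⁾, λ⁽¹⁾, λ⁽ˢ⁾ be their largest eigenvalues. Then λ⁽⁰⁾ = m − 1 ≥ λ⁽¹⁾ = m/2 − 2 + √(m²/4 + m − 3) ≥ λ⁽ˢ⁾. -/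
open Matrix
open scoped Classical

noncomputable section

namespace FramesErasures

section Aux

variable {m : ℕ}

lemma eps_sq {ε : Fin m → ℝ} (hε : ∀ i, ε i = 1 ∨ ε i = -1) (i : Fin m) : ε i * ε i = 1 := by
  rcases hε i with h | h <;> rw [h] <;> norm_num

lemma seidel_symm_apply (G : SimpleGraph (Fin m)) (i j : Fin m) :
    seidel G i j = seidel G j i := by
  unfold seidel
  simp only [Matrix.of_apply]
  by_cases h : i = j
  · simp [h]
  · rw [if_neg h, if_neg (fun hh : j = i => h hh.symm)]
    by_cases h2 : G.Adj i j
    · rw [if_pos h2, if_pos h2.symm]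
    · rw [if_neg h2, if_neg (fun hh : G.Adj j i => h2 hh.symm)]

lemma switching_symm {G H : SimpleGraph (Fin m)} (h : SwitchingEquivalent G H) :
    SwitchingEquivalent H G := by
  obtain ⟨σ, ε, hε, hQ⟩ := h
  refine ⟨σ.symm, fun i => ε (σ.symm i), fun i => hε _, fun i j => ?_⟩
  rw [hQ (σ.symm i) (σ.symm j)]
  simp only [Equiv.apply_symm_apply]
  have h1 := eps_sq hε (σ.symm i)
  have h2 := eps_sq hε (σ.symm j)
  have : ε (σ.symm i) * ε (σ.symm j) * (ε (σ.symm i) * ε (σ.symm j) * seidel G i j)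
      = (ε (σ.symm i) * ε (σ.symm i)) * ((ε (σ.symm j) * ε (σ.symm j)) * seidel G i j) := by
    ring
  rw [this, h1, h2, one_mul, one_mul]

lemma eig_transfer_s9 {G H : SimpleGraph (Fin m)} (h : SwitchingEquivalent G H) {μ : ℝ}
    {v : Fin m → ℝ} (hv : v ≠ 0) (he : seidel G *ᵥ v = μ • v) :
    ∃ w : Fin m → ℝ, w ≠ 0 ∧ seidel H *ᵥ w = μ • w := by
  obtain ⟨σ, ε, hε, hQ⟩ := h
  refine ⟨fun i => ε i * v (σ i), ?_, ?_⟩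
  · intro h0
    apply hv
    funext k
    have hg : ε (σ.symm k) * v (σ (σ.symm k)) = 0 := congrFun h0 (σ.symm k)
    rw [Equiv.apply_symm_apply] at hg
    show v k = 0
    rcases hε (σ.symm k) with h1 | h1 <;> rw [h1] at hg <;> linarith
  · funext i
    show ∑ j, seidel H i j * (ε j * v (σ j)) = μ * (ε i * v (σ i))
    have key : ∀ j, seidel H i j * (ε j * v (σ j))
        = ε i * (seidel G (σ i) (σ j) * v (σ j)) := by
      intro j
      rw [hQ i j]
      have h2 := eps_sq hε j
      linear_combination ε i * seidel G (σ i) (σ j) * v (σ j) * h2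
    rw [Finset.sum_congr rfl fun j _ => key j, ← Finset.mul_sum]
    rw [Equiv.sum_comp σ (fun k => seidel G (σ i) k * v k)]
    have hvi : ∑ k, seidel G (σ i) k * v k = μ * v (σ i) := congrFun he (σ i)
    rw [hvi]
    ring

lemma seidel_mulVec (H : SimpleGraph (Fin m)) (v : Fin m → ℝ) (i : Fin m) :
    (seidel H *ᵥ v) i
      = (∑ j, v j) - v i - 2 * ∑ j, (if H.Adj i j then v j else 0) := by
  show ∑ j, seidel H i j * v j = _
  have hpt : ∀ j, seidel H i j * v j
      = v j - (if i = j then v j else 0) - 2 * (if H.Adj i j then v j else 0) := by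
    intro j
    unfold seidel
    simp only [Matrix.of_apply]
    by_cases h1 : i = j
    · subst h1; simp [H.irrefl]
    · by_cases h2 : H.Adj i j <;> simp [h1, h2] <;> ring
  rw [Finset.sum_congr rfl fun j _ => hpt j, Finset.sum_sub_distrib, Finset.sum_sub_distrib,
    Finset.sum_ite_eq Finset.univ i v, ← Finset.mul_sum]
  simp

end Aux


section Aux2

variable {m : ℕ}

lemma switch_nonneg (G : SimpleGraph (Fin m)) {μ : ℝ} {v : Fin m → ℝ} (hv : v ≠ 0)
    (he : seidel G *ᵥ v = μ • v) :
    ∃ H : SimpleGraph (Fin m), SwitchingEquivalent G H ∧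
      ∃ w : Fin m → ℝ, (∀ i, 0 ≤ w i) ∧ w ≠ 0 ∧ seidel H *ᵥ w = μ • w := by
  set ε : Fin m → ℝ := fun i => if 0 ≤ v i then 1 else -1 with hεdef
  have hε1 : ∀ i, ε i = 1 ∨ ε i = -1 := by
    intro i
    simp only [hεdef]
    split
    · exact Or.inl rfl
    · exact Or.inr rfl
  have hεsq := eps_sq hε1
  set H : SimpleGraph (Fin m) :=
    { Adj := fun i j => i ≠ j ∧ ε i * ε j * seidel G i j = -1
      symm := by
        constructor
        rintro i j ⟨h1, h2⟩
        refine ⟨h1.symm, ?_⟩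
        rw [seidel_symm_apply G j i]
        linear_combination h2
      loopless := ⟨fun i h => h.1 rfl⟩ } with hHdef
  have hQ : ∀ i j, seidel H i j = ε i * ε j * seidel G i j := by
    intro i j
    by_cases hij : i = j
    · subst hij
      have : seidel G i i = 0 := by unfold seidel; simp
      have h2 : seidel H i i = 0 := by unfold seidel; simp
      rw [h2, this, mul_zero]
    · have hHa : seidel H i j = if H.Adj i j then -1 else 1 := by
        have gen : ∀ K : SimpleGraph (Fin m), seidel K i j = if K.Adj i j then -1 else 1 := by
          intro K
          unfold seidel; simp [hij]
        convert gen H using 2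
      by_cases hA : ε i * ε j * seidel G i j = -1
      · rw [hHa, if_pos ⟨hij, hA⟩, hA]
      · rw [hHa, if_neg (fun hc : H.Adj i j => hA hc.2)]
        have hG1 : seidel G i j = 1 ∨ seidel G i j = -1 := by
          unfold seidel
          simp only [Matrix.of_apply, if_neg hij]
          split
          · exact Or.inr rfl
          · exact Or.inl rfl
        rcases hε1 i with e1 | e1 <;> rcases hε1 j with e2 | e2 <;>
          rcases hG1 with g | g <;> norm_num [e1, e2, g] at hA <;> norm_num [e1, e2, g]
  refine ⟨H, ⟨1, ε, hε1, fun i j => by simpa using hQ i j⟩, fun i => ε i * v i, ?_, ?_, ?_⟩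
  · intro i
    simp only [hεdef]
    split
    · rename_i h; simpa using h
    · rename_i h; push_neg at h; nlinarith
  · intro h0
    apply hv
    funext k
    have hg : ε k * v k = 0 := congrFun h0 k
    show v k = 0
    rcases hε1 k with h1 | h1 <;> rw [h1] at hg <;> linarith
  · funext i
    show ∑ j, seidel H i j * (ε j * v j) = μ * (ε i * v i)
    have key : ∀ j, seidel H i j * (ε j * v j) = ε i * (seidel G i j * v j) := by
      intro j
      rw [hQ i j]
      linear_combination ε i * seidel G i j * v j * hεsq j
    rw [Finset.sum_congr rfl fun j _ => key j, ← Finset.mul_sum]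
    have hvi : ∑ k, seidel G i k * v k = μ * v i := congrFun he i
    rw [hvi]
    ring

lemma key_bound (hm : 3 ≤ m) (H : SimpleGraph (Fin m)) {a b : Fin m} (hab : H.Adj a b)
    {lam : ℝ} {w : Fin m → ℝ} (hw : ∀ i, 0 ≤ w i) (hw0 : w ≠ 0)
    (he : seidel H *ᵥ w = lam • w) :
    lam ≤ (m : ℝ) / 2 - 2 + Real.sqrt ((m : ℝ) ^ 2 / 4 + (m : ℝ) - 3) := by
  have hm3 : (3 : ℝ) ≤ (m : ℝ) := by exact_mod_cast hm
  set r := Real.sqrt ((m : ℝ) ^ 2 / 4 + (m : ℝ) - 3) with hrdef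
  have hr0 : 0 ≤ r := Real.sqrt_nonneg _
  have hrsq : r ^ 2 = (m : ℝ) ^ 2 / 4 + (m : ℝ) - 3 := Real.sq_sqrt (by nlinarith)
  have hrbig : (m : ℝ) / 2 ≤ r := by
    have : ((m : ℝ) / 2) ^ 2 ≤ r ^ 2 := by nlinarith
    nlinarith
  by_cases hl : lam ≤ 1
  · linarith
  push_neg at hl
  set S := ∑ i, w i with hSdef
  set N : Fin m → ℝ := fun i => ∑ j, (if H.Adj i j then w j else 0) with hNdef
  have heq : ∀ i, S - w i - 2 * N i = lam * w i := by
    intro i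
    have h1 := congrFun he i
    rw [seidel_mulVec] at h1
    simpa using h1
  have hN : ∀ i, 0 ≤ N i := by
    intro i
    apply Finset.sum_nonneg
    intro j _
    split
    · exact hw j
    · exact le_refl 0
  have hS : 0 < S := by
    obtain ⟨i₀, hi₀⟩ := Function.ne_iff.mp hw0
    have h1 : w i₀ ≠ 0 := hi₀
    have h2 : 0 < w i₀ := lt_of_le_of_ne (hw i₀) (Ne.symm h1)
    have h3 : w i₀ ≤ S := Finset.single_le_sum (fun i _ => hw i) (Finset.mem_univ i₀)
    linarith
  set D := ∑ i, N i with hDdef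
  have hD : 2 * D = ((m : ℝ) - 1 - lam) * S := by
    have h1 : ∑ i, (S - w i - 2 * N i) = ∑ i, lam * w i :=
      Finset.sum_congr rfl fun i _ => heq i
    rw [Finset.sum_sub_distrib, Finset.sum_sub_distrib, Finset.sum_const, ← Finset.mul_sum,
      ← Finset.mul_sum] at h1
    simp only [Finset.card_univ, Fintype.card_fin, nsmul_eq_mul] at h1
    rw [← hSdef, ← hDdef] at h1
    linarith
  have hNa : w b ≤ N a := by
    have h1 : (if H.Adj a b then w b else 0) ≤ N a := by
      refine Finset.single_le_sum (f := fun j => if H.Adj a j then w j else 0)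
        ?_ (Finset.mem_univ b)
      intro j _
      split
      · exact hw j
      · exact le_refl 0
    rwa [if_pos hab] at h1
  have hNb : w a ≤ N b := by
    have h1 : (if H.Adj b a then w a else 0) ≤ N b := by
      refine Finset.single_le_sum (f := fun j => if H.Adj b j then w j else 0)
        ?_ (Finset.mem_univ a)
      intro j _
      split
      · exact hw j
      · exact le_refl 0
    rwa [if_pos hab.symm] at h1
  have hD2 : N a + N b ≤ D := by
    have h1 : N a + N b = ∑ i ∈ ({a, b} : Finset (Fin m)), N i :=
      (Finset.sum_pair hab.ne).symm
    rw [h1]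
    exact Finset.sum_le_sum_of_subset_of_nonneg (Finset.subset_univ _)
      (fun i _ _ => hN i)
  have hab_sum : (lam + 1) * (w a + w b) = 2 * S - 2 * (N a + N b) := by
    have h1 := heq a
    have h2 := heq b
    ring_nf
    linarith
  have h4 : 4 ≤ (lam + 3) * ((m : ℝ) - 1 - lam) := by
    have h1 : (lam + 1) * (w a + w b) ≤ (lam + 1) * (N a + N b) := by nlinarith
    have h2 : 2 * S ≤ (lam + 3) * (N a + N b) := by nlinarith
    have h3 : 2 * S ≤ (lam + 3) * D := by nlinarith [hD2]
    have h5 : 4 * S ≤ ((lam + 3) * ((m : ℝ) - 1 - lam)) * S := by nlinarith [hD]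
    exact le_of_mul_le_mul_right (by linarith) hS
  by_contra hcon
  push_neg at hcon
  have f1 : 0 < lam - ((m : ℝ) / 2 - 2 + r) := by linarith
  have f2 : 0 < lam - ((m : ℝ) / 2 - 2 - r) := by linarith
  nlinarith [mul_pos f1 f2]

end Aux2


section Aux3

variable {m : ℕ}

lemma class_bound (hm : 3 ≤ m) {s : ℕ} (hs : 1 ≤ s) {G : SimpleGraph (Fin m)}
    (hG : MinSwitchEdges G s) {μ : ℝ} {v : Fin m → ℝ} (hv : v ≠ 0)
    (he : seidel G *ᵥ v = μ • v) :
    μ ≤ (m : ℝ) / 2 - 2 + Real.sqrt ((m : ℝ) ^ 2 / 4 + (m : ℝ) - 3) := by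
  obtain ⟨H, hGH, w, hwpos, hw0, hwe⟩ := switch_nonneg G hv he
  have hcard : s ≤ H.edgeSet.ncard := hG.2 ⟨H, hGH, rfl⟩
  have hne : H.edgeSet.Nonempty := by
    rw [Set.nonempty_iff_ne_empty]
    intro h
    rw [h, Set.ncard_empty] at hcard
    omega
  obtain ⟨a, b, hab⟩ : ∃ a b, H.Adj a b := by
    obtain ⟨e, hee⟩ := hne
    induction e using Sym2.ind with
    | _ a b => exact ⟨a, b, H.mem_edgeSet.mp hee⟩
  exact key_bound hm H hab hwpos hw0 hwe

lemma empty_max (hm : 3 ≤ m) {H : SimpleGraph (Fin m)} (h : H.edgeSet.ncard = 0) :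
    IsMaxEigenvalue (seidel H) ((m : ℝ) - 1) := by
  have hm3 : (3 : ℝ) ≤ (m : ℝ) := by exact_mod_cast hm
  have hadj : ∀ i j, ¬ H.Adj i j := by
    intro i j hij
    have h1 : s(i, j) ∈ H.edgeSet := H.mem_edgeSet.mpr hij
    rw [Set.ncard_eq_zero] at h
    rw [h] at h1
    exact h1
  have hmv : ∀ (v : Fin m → ℝ) (i : Fin m), (seidel H *ᵥ v) i = (∑ j, v j) - v i := by
    intro v i
    rw [seidel_mulVec]
    simp [hadj]
  constructor
  · refine ⟨fun _ => 1, ?_, ?_⟩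
    · intro h0
      have := congrFun h0 ⟨0, by omega⟩
      simp at this
    · funext i
      rw [hmv]
      show (∑ _j : Fin m, (1 : ℝ)) - 1 = ((m : ℝ) - 1) * 1
      simp [Finset.card_univ]
  · rintro μ ⟨v, hv, hev⟩
    by_cases hμ : μ = -1
    · subst hμ; linarith
    · have hμ1 : μ + 1 ≠ 0 := fun hc => hμ (by linarith)
      set S := ∑ j, v j with hSdef
      have heq : ∀ i, S - v i = μ * v i := by
        intro i
        have h1 := congrFun hev i
        rw [hmv] at h1
        simpa using h1
      have hvi : ∀ i, v i = S / (μ + 1) := by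
        intro i
        have := heq i
        field_simp
        linarith
      obtain ⟨i₀, hi₀⟩ := Function.ne_iff.mp hv
      have hc : S / (μ + 1) ≠ 0 := by
        rw [← hvi i₀]
        exact hi₀
      have hSsum : S = (m : ℝ) * (S / (μ + 1)) := by
        calc S = ∑ j, v j := hSdef
        _ = ∑ _j : Fin m, S / (μ + 1) := Finset.sum_congr rfl fun j _ => hvi j
        _ = (m : ℝ) * (S / (μ + 1)) := by simp [Finset.card_univ]
      have h2 : (μ + 1) * (S / (μ + 1)) = S := by field_simp
      have h3 : (μ + 1) * (S / (μ + 1)) = (m : ℝ) * (S / (μ + 1)) := h2.trans hSsum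
      have := mul_right_cancel₀ hc h3
      linarith

lemma oneEdge_eigen (hm : 3 ≤ m) {H : SimpleGraph (Fin m)} (h : H.edgeSet.ncard = 1) :
    ∃ v : Fin m → ℝ, v ≠ 0 ∧
      seidel H *ᵥ v = ((m : ℝ) / 2 - 2 + Real.sqrt ((m : ℝ) ^ 2 / 4 + (m : ℝ) - 3)) • v := by
  have hm3 : (3 : ℝ) ≤ (m : ℝ) := by exact_mod_cast hm
  have hm2 : (m : ℝ) - 2 ≠ 0 := by linarith
  obtain ⟨e, he⟩ := Set.ncard_eq_one.mp h
  obtain ⟨a, b, hne, hadj⟩ : ∃ a b : Fin m, a ≠ b ∧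
      ∀ i j, H.Adj i j ↔ ((i = a ∧ j = b) ∨ (i = b ∧ j = a)) := by
    induction e using Sym2.ind with
    | _ a b =>
      have hab : H.Adj a b := by
        rw [← H.mem_edgeSet, he]
        exact Set.mem_singleton _
      refine ⟨a, b, hab.ne, fun i j => ?_⟩
      rw [← H.mem_edgeSet, he, Set.mem_singleton_iff, Sym2.eq_iff]
  set r := Real.sqrt ((m : ℝ) ^ 2 / 4 + (m : ℝ) - 3) with hrdef
  have hr0 : 0 ≤ r := Real.sqrt_nonneg _
  have hrsq : r ^ 2 = (m : ℝ) ^ 2 / 4 + (m : ℝ) - 3 := Real.sq_sqrt (by nlinarith)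
  set lam := (m : ℝ) / 2 - 2 + r with hlamdef
  have hq : lam ^ 2 - ((m : ℝ) - 4) * lam - 3 * (m : ℝ) + 7 = 0 := by
    rw [hlamdef]
    linear_combination hrsq
  set x := (lam + 1) / ((m : ℝ) - 2) with hxdef
  have hx : ((m : ℝ) - 2) * x = lam + 1 := by
    rw [hxdef]
    field_simp
  set v : Fin m → ℝ := fun i => if i = a ∨ i = b then (1 : ℝ) else x with hvdef
  have hva : v a = 1 := by simp [hvdef]
  have hvb : v b = 1 := by simp [hvdef]
  have hS : ∑ j, v j = (m : ℝ) * x + 2 * (1 - x) := by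
    have hpt : ∀ j : Fin m, v j
        = x + ((if j = a then 1 - x else 0) + (if j = b then 1 - x else 0)) := by
      intro j
      by_cases h1 : j = a
      · subst h1
        rw [hvdef]
        simp [hne]
      · by_cases h2 : j = b
        · subst h2
          rw [hvdef]
          simp [h1]
        · rw [hvdef]
          simp [h1, h2]
    rw [Finset.sum_congr rfl fun j _ => hpt j, Finset.sum_add_distrib, Finset.sum_add_distrib,
      Finset.sum_const, Finset.sum_ite_eq' Finset.univ a (fun _ => 1 - x),
      Finset.sum_ite_eq' Finset.univ b (fun _ => 1 - x)]
    simp [Finset.card_univ]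
    ring
  refine ⟨v, fun h0 => by simpa [hva] using congrFun h0 a, ?_⟩
  funext i
  rw [show ((((m : ℝ) / 2 - 2 + r) • v) i) = lam * v i from rfl]
  rw [seidel_mulVec, hS]
  by_cases hia : i = a
  · subst hia
    have hA : ∑ j, (if H.Adj i j then v j else 0) = 1 := by
      have hpt : ∀ j, (if H.Adj i j then v j else 0) = (if j = b then v j else 0) := by
        intro j
        have : H.Adj i j ↔ j = b := by
          rw [hadj]
          constructor
          · rintro (⟨-, hh⟩ | ⟨hh, -⟩)
            · exact hh
            · exact absurd hh hne
          · intro hh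
            exact Or.inl ⟨rfl, hh⟩
        simp only [this]
      rw [Finset.sum_congr rfl fun j _ => hpt j,
        Finset.sum_ite_eq' Finset.univ b v, if_pos (Finset.mem_univ b), hvb]
    rw [hA, hva]
    linear_combination hx
  · by_cases hib : i = b
    · subst hib
      have hA : ∑ j, (if H.Adj i j then v j else 0) = 1 := by
        have hpt : ∀ j, (if H.Adj i j then v j else 0) = (if j = a then v j else 0) := by
          intro j
          have : H.Adj i j ↔ j = a := by
            rw [hadj]
            constructor
            · rintro (⟨hh, -⟩ | ⟨-, hh⟩)
              · exact absurd hh.symm hne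
              · exact hh
            · intro hh
              exact Or.inr ⟨rfl, hh⟩
          simp only [this]
        rw [Finset.sum_congr rfl fun j _ => hpt j,
          Finset.sum_ite_eq' Finset.univ a v, if_pos (Finset.mem_univ a), hva]
      rw [hA, hvb]
      linear_combination hx
    · have hA : ∑ j, (if H.Adj i j then v j else 0) = 0 := by
        apply Finset.sum_eq_zero
        intro j _
        rw [if_neg]
        rw [hadj]
        rintro (⟨hh, -⟩ | ⟨hh, -⟩)
        · exact hia hh
        · exact hib hh
      have hvi : v i = x := by
        rw [hvdef]
        simp [hia, hib]
      rw [hA, hvi]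
      have h2 : ((m : ℝ) * x + 2 * (1 - x) - x - 2 * 0) * ((m : ℝ) - 2)
          = (lam * x) * ((m : ℝ) - 2) := by
        linear_combination ((m : ℝ) - 3) * hx - lam * hx - hq
      exact mul_right_cancel₀ hm2 h2

end Aux3

theorem statement9 (m s : ℕ) (hm : 3 ≤ m) (hs : 1 ≤ s)
    (G0 G1 Gs : SimpleGraph (Fin m))
    (h0 : MinSwitchEdges G0 0) (h1 : MinSwitchEdges G1 1) (hGs : MinSwitchEdges Gs s)
    (l0 l1 ls : ℝ)
    (hl0 : IsMaxEigenvalue (seidel G0) l0)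
    (hl1 : IsMaxEigenvalue (seidel G1) l1)
    (hls : IsMaxEigenvalue (seidel Gs) ls) :
    l0 = (m : ℝ) - 1 ∧
    l1 = (m : ℝ) / 2 - 2 + Real.sqrt ((m : ℝ) ^ 2 / 4 + (m : ℝ) - 3) ∧
    l1 ≤ l0 ∧ ls ≤ l1 := by
  have hm3 : (3 : ℝ) ≤ (m : ℝ) := by exact_mod_cast hm
  have hr0 : 0 ≤ Real.sqrt ((m : ℝ) ^ 2 / 4 + (m : ℝ) - 3) := Real.sqrt_nonneg _
  have hrsq : Real.sqrt ((m : ℝ) ^ 2 / 4 + (m : ℝ) - 3) ^ 2 = (m : ℝ) ^ 2 / 4 + (m : ℝ) - 3 :=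
    Real.sq_sqrt (by nlinarith)
  obtain ⟨H0, hGH0, hH0⟩ := h0.1
  have hmax0 := empty_max hm hH0
  have hl0eq : l0 = (m : ℝ) - 1 := by
    obtain ⟨v, hv, hev⟩ := hl0.1
    obtain ⟨w, hw, hew⟩ := eig_transfer_s9 hGH0 hv hev
    have hle : l0 ≤ (m : ℝ) - 1 := hmax0.2 l0 ⟨w, hw, hew⟩
    obtain ⟨v2, hv2, hev2⟩ := hmax0.1
    obtain ⟨w2, hw2, hew2⟩ := eig_transfer_s9 (switching_symm hGH0) hv2 hev2
    have hge : (m : ℝ) - 1 ≤ l0 := hl0.2 _ ⟨w2, hw2, hew2⟩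
    linarith
  have hl1eq : l1 = (m : ℝ) / 2 - 2 + Real.sqrt ((m : ℝ) ^ 2 / 4 + (m : ℝ) - 3) := by
    have hle : l1 ≤ (m : ℝ) / 2 - 2 + Real.sqrt ((m : ℝ) ^ 2 / 4 + (m : ℝ) - 3) := by
      obtain ⟨v, hv, hev⟩ := hl1.1
      exact class_bound hm (le_refl 1) h1 hv hev
    obtain ⟨H1, hGH1, hH1⟩ := h1.1
    obtain ⟨v, hv, hev⟩ := oneEdge_eigen hm hH1
    obtain ⟨w, hw, hew⟩ := eig_transfer_s9 (switching_symm hGH1) hv hev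
    have hge := hl1.2 _ ⟨w, hw, hew⟩
    linarith
  have hlseq : ls ≤ l1 := by
    obtain ⟨v, hv, hev⟩ := hls.1
    have := class_bound hm hs hGs hv hev
    linarith
  refine ⟨hl0eq, hl1eq, ?_, hlseq⟩
  rw [hl0eq, hl1eq]
  nlinarith [hrsq, hr0]

end FramesErasures
end
end

section
/- Let F be a real 2-uniform (n,k)-frame such that for some m ≥ 3 the associated graph G_F has no induced complete bipartite subgraph on m vertices. Then e_m^∞(F) ≤ k/n + c_{n,k}·(m/2 − 2 + √(m²/4 + m − 3)). Moreover, if G_F contains an induced subgraph on m vertices that differs from a complete bipartite graph by one edge (i.e., whose switching class has minimum edge number 1), then equality holds. -/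
open Matrix
open scoped Classical

noncomputable section

namespace FramesErasures

-- Auxiliary lemmas

noncomputable def BB (m : ℝ) : ℝ := m/2 - 2 + Real.sqrt (m^2/4 + m - 3)

lemma BB_facts {m : ℝ} (hm : 3 ≤ m) :
    1 ≤ BB m ∧ (BB m)^2 = (m-4)*(BB m) + 3*m - 7 ∧ m - 4 < 2 * BB m := by
  have harg : (0:ℝ) ≤ m^2/4 + m - 3 := by nlinarith
  have hR2 : (Real.sqrt (m^2/4 + m - 3))^2 = m^2/4 + m - 3 := Real.sq_sqrt harg
  have hR : (3/2 : ℝ) ≤ Real.sqrt (m^2/4 + m - 3) := by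
    rw [show (3/2 : ℝ) = Real.sqrt ((3/2)^2) from (Real.sqrt_sq (by norm_num)).symm]
    apply Real.sqrt_le_sqrt; nlinarith
  refine ⟨?_, ?_, ?_⟩
  · unfold BB; nlinarith
  · unfold BB; nlinarith
  · unfold BB; nlinarith

lemma euc_norm_sq {k : ℕ} (x : EuclideanSpace ℝ (Fin k)) :
    ‖x‖ ^ 2 = dotProduct (WithLp.equiv _ _ x) (WithLp.equiv _ _ x) := by
  rw [← real_inner_self_eq_norm_sq, EuclideanSpace.inner_eq_star_dotProduct]
  simp [star_trivial]

lemma opNorm_le_of {k : ℕ} (M : Matrix (Fin k) (Fin k) ℝ) (μ : ℝ) (hμ : 0 ≤ μ)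
    (h : ∀ x : Fin k → ℝ, (M *ᵥ x) ⬝ᵥ (M *ᵥ x) ≤ μ * (x ⬝ᵥ (M *ᵥ x))) :
    opNorm M ≤ μ := by
  apply ContinuousLinearMap.opNorm_le_bound _ hμ
  intro x
  set T := Matrix.toEuclideanCLM (𝕜 := ℝ) M
  have hTx : WithLp.equiv _ _ (T x) = M *ᵥ (WithLp.equiv _ _ x) :=
    Matrix.ofLp_toEuclideanCLM M x
  have h1 : ‖T x‖ ^ 2 ≤ μ * (‖x‖ * ‖T x‖) := by
    have h2 := h (WithLp.equiv _ _ x)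
    rw [euc_norm_sq, hTx]
    refine h2.trans ?_
    have : (WithLp.equiv _ _ x) ⬝ᵥ (M *ᵥ (WithLp.equiv _ _ x)) = inner ℝ x (T x) := by
      rw [EuclideanSpace.inner_eq_star_dotProduct]
      simp [star_trivial, hTx]
      rw [dotProduct_comm]; rfl
    rw [this]
    exact mul_le_mul_of_nonneg_left (real_inner_le_norm x (T x)) hμ
  nlinarith [norm_nonneg (T x), norm_nonneg x, mul_nonneg hμ (norm_nonneg x)]

lemma le_opNorm_of_eigen {k : ℕ} (M : Matrix (Fin k) (Fin k) ℝ) (μ : ℝ) (hμ : 0 ≤ μ)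
    (v : Fin k → ℝ) (hv : v ≠ 0) (h : M *ᵥ v = μ • v) : μ ≤ opNorm M := by
  set T := Matrix.toEuclideanCLM (𝕜 := ℝ) M
  set x : EuclideanSpace ℝ (Fin k) := (WithLp.equiv 2 _).symm v
  have hx : ‖T x‖ = μ * ‖x‖ := by
    have hTx : WithLp.equiv _ _ (T x) = M *ᵥ (WithLp.equiv _ _ x) :=
      Matrix.ofLp_toEuclideanCLM M x
    have : WithLp.equiv _ _ (T x) = WithLp.equiv _ _ (μ • x) := by
      rw [hTx]; simp only [x, Equiv.apply_symm_apply]; rw [h]; rfl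
    have hTm : T x = μ • x := (WithLp.equiv 2 _).injective this
    rw [hTm, norm_smul]; simp [abs_of_nonneg hμ]
  have hx0 : x ≠ 0 := by
    intro hc; apply hv; have := congrArg (WithLp.equiv 2 _) hc; simpa [x] using this
  have := ContinuousLinearMap.le_opNorm T x
  rw [hx] at this
  have hxn : 0 < ‖x‖ := norm_pos_iff.mpr hx0
  exact le_of_mul_le_mul_right this hxn

lemma quadform_le {ι : Type*} [Fintype ι] [DecidableEq ι] (Q : Matrix ι ι ℝ)
    (hsym : Qᵀ = Q) (B : ℝ) (hB : 0 ≤ B)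
    (h : ∀ (lam : ℝ) (v : ι → ℝ), 0 ≤ lam → v ≠ 0 → Q *ᵥ v = lam • v → lam ≤ B) :
    ∀ v : ι → ℝ, v ⬝ᵥ (Q *ᵥ v) ≤ B * (v ⬝ᵥ v) := by
  intro v
  have hQ : Q.IsHermitian := by
    rw [Matrix.IsHermitian, conjTranspose_eq_transpose_of_trivial, hsym]
  have heval : ∀ i : ι, hQ.eigenvalues i ≤ B := by
    intro i
    rcases le_or_gt (hQ.eigenvalues i) 0 with h0 | h0
    · linarith
    · refine h _ (⇑(hQ.eigenvectorBasis i)) h0.le ?_ (hQ.mulVec_eigenvectorBasis i)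
      intro hc
      have := hQ.eigenvectorBasis.orthonormal.1 i
      rw [show (hQ.eigenvectorBasis i : EuclideanSpace ℝ ι) = 0 from ?_] at this
      · simp at this
      · ext j; exact congrFun hc j
  set x : EuclideanSpace ℝ ι := (WithLp.equiv 2 _).symm v
  set y : EuclideanSpace ℝ ι := (WithLp.equiv 2 _).symm (Q *ᵥ v)
  have hdot : ∀ a b : EuclideanSpace ℝ ι,
      (inner ℝ a b : ℝ) = (WithLp.equiv 2 _ a) ⬝ᵥ (WithLp.equiv 2 _ b) := by
    intro a b
    rw [EuclideanSpace.inner_eq_star_dotProduct]; simp [star_trivial]; exact dotProduct_comm _ _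
  have key : v ⬝ᵥ (Q *ᵥ v) = (inner ℝ x y : ℝ) := by
    rw [hdot]; simp [x, y]
  rw [key, ← hQ.eigenvectorBasis.sum_inner_mul_inner x y]
  have hterm : ∀ i : ι, (inner ℝ x (hQ.eigenvectorBasis i) : ℝ) *
      (inner ℝ (hQ.eigenvectorBasis i) y : ℝ) =
      hQ.eigenvalues i * ((inner ℝ x (hQ.eigenvectorBasis i) : ℝ))^2 := by
    intro i
    have h1 : (inner ℝ (hQ.eigenvectorBasis i) y : ℝ)
        = hQ.eigenvalues i * (inner ℝ (hQ.eigenvectorBasis i) x : ℝ) := by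
      rw [hdot, hdot]
      simp only [y, x, Equiv.apply_symm_apply]
      have : (⇑(hQ.eigenvectorBasis i) : ι → ℝ) ⬝ᵥ (Q *ᵥ v)
          = (Q *ᵥ ⇑(hQ.eigenvectorBasis i)) ⬝ᵥ v := by
        rw [Matrix.dotProduct_mulVec, ← Matrix.mulVec_transpose, hsym]
      erw [this]; rw [hQ.mulVec_eigenvectorBasis]
      simp [smul_dotProduct]
    rw [h1, real_inner_comm (hQ.eigenvectorBasis i) x]
    ring
  rw [Finset.sum_congr rfl fun i _ => hterm i]
  have hpar : ∑ i, ((inner ℝ x (hQ.eigenvectorBasis i) : ℝ))^2 = v ⬝ᵥ v := by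
    have := hQ.eigenvectorBasis.sum_inner_mul_inner x x
    rw [hdot x x] at this
    simp only [x, Equiv.apply_symm_apply] at this
    rw [← this]
    refine Finset.sum_congr rfl fun i _ => ?_
    rw [real_inner_comm x (hQ.eigenvectorBasis i)]; ring
  calc ∑ i, hQ.eigenvalues i * ((inner ℝ x (hQ.eigenvectorBasis i) : ℝ))^2
      ≤ ∑ i, B * ((inner ℝ x (hQ.eigenvectorBasis i) : ℝ))^2 := by
        refine Finset.sum_le_sum fun i _ => ?_
        exact mul_le_mul_of_nonneg_right (heval i) (sq_nonneg _)
    _ = B * (v ⬝ᵥ v) := by rw [← Finset.mul_sum, hpar]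

lemma eigen_le {ι : Type*} [Fintype ι] [DecidableEq ι] (Q : Matrix ι ι ℝ)
    (hsym : Qᵀ = Q) (hdiag : ∀ i, Q i i = 0)
    (hoff : ∀ i j, i ≠ j → Q i j = 1 ∨ Q i j = -1)
    (hm : 3 ≤ Fintype.card ι)
    (hnb : ¬ ∃ ε : ι → ℝ, (∀ i, ε i = 1 ∨ ε i = -1) ∧ ∀ i j, i ≠ j → Q i j = ε i * ε j)
    (lam : ℝ) (hlam : 0 ≤ lam) (v : ι → ℝ) (hv : v ≠ 0) (heig : Q *ᵥ v = lam • v) :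
    lam ≤ BB (Fintype.card ι) := by
  classical
  set m : ℝ := (Fintype.card ι : ℝ) with hmdef
  have hm3 : (3:ℝ) ≤ m := by rw [hmdef]; exact_mod_cast hm
  -- switching signs
  set ε : ι → ℝ := fun i => if v i < 0 then -1 else 1 with hεdef
  have hεpm : ∀ i, ε i = 1 ∨ ε i = -1 := by
    intro i; by_cases h : v i < 0 <;> simp [hεdef, h]
  have hε2 : ∀ i, ε i * ε i = 1 := by
    intro i; rcases hεpm i with h | h <;> rw [h] <;> norm_num
  set w : ι → ℝ := fun i => ε i * v i with hwdef
  have hw0 : ∀ i, 0 ≤ w i := by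
    intro i; by_cases h : v i < 0
    · simp only [hwdef, hεdef, if_pos h]; nlinarith
    · push_neg at h; simp only [hwdef, hεdef, if_neg (not_lt.mpr h)]; nlinarith
  set Q' : Matrix ι ι ℝ := Matrix.of (fun i j => ε i * ε j * Q i j) with hQ'def
  have hQ'app : ∀ i j, Q' i j = ε i * ε j * Q i j := fun i j => rfl
  have heig' : ∀ i, ∑ j, Q' i j * w j = lam * w i := by
    intro i
    have h1 : ∀ j, Q' i j * w j = ε i * (Q i j * v j) := by
      intro j
      have h := hε2 j
      simp only [hQ'app, hwdef]
      linear_combination (ε i * Q i j * v j) * h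
    rw [Finset.sum_congr rfl fun j _ => h1 j, ← Finset.mul_sum]
    have h2 : ∑ j, Q i j * v j = lam * v i := by
      have := congrFun heig i
      simpa [Matrix.mulVec, dotProduct] using this
    rw [h2, hwdef]; ring
  -- existence of an edge in the switched graph
  have hedge : ∃ p q, p ≠ q ∧ Q' p q = -1 := by
    by_contra hc
    push_neg at hc
    apply hnb
    refine ⟨ε, hεpm, fun i j hij => ?_⟩
    have hoffij := hoff i j hij
    have hQ'pm : Q' i j = 1 ∨ Q' i j = -1 := by
      rcases hεpm i with h1 | h1 <;> rcases hεpm j with h2 | h2 <;>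
        rcases hoffij with h3 | h3 <;> simp [hQ'app, h1, h2, h3] <;> norm_num
    have h1 : Q' i j = 1 := by
      rcases hQ'pm with h | h
      · exact h
      · exact absurd h (hc i j hij)
    have h2 := hε2 i; have h3 := hε2 j
    have := hQ'app i j
    rw [h1] at this
    -- 1 = ε i * ε j * Q i j  ⇒  Q i j = ε i * ε j
    linear_combination (-(ε i * ε j)) * this - (Q i j * (ε j * ε j)) * h2 - Q i j * h3
  obtain ⟨p, q, hpq, hQ'pq⟩ := hedge
  have hQ'qp : Q' q p = -1 := by
    have hsym' : Q q p = Q p q := by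
      have := congrFun (congrFun hsym p) q
      simpa [Matrix.transpose_apply] using this
    simp only [hQ'app] at hQ'pq ⊢
    rw [hsym']; linarith [hQ'pq]
  -- adjacency weights
  set a : ι → ι → ℝ := fun i j => if i = j then 0 else (1 - Q' i j)/2 with hadef
  have ha0 : ∀ i j, 0 ≤ a i j := by
    intro i j
    by_cases h : i = j
    · simp [hadef, h]
    · simp only [hadef, if_neg h]
      rcases hεpm i with h1 | h1 <;> rcases hεpm j with h2 | h2 <;>
        rcases hoff i j h with h3 | h3 <;> simp [hQ'app, h1, h2, h3] <;> norm_num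
  have hQ'a : ∀ i j, Q' i j = (if i = j then (0:ℝ) else 1) - 2 * a i j := by
    intro i j
    by_cases h : i = j
    · subst h; simp [hQ'app, hdiag i, hadef]
    · simp only [hadef, if_neg h]; ring
  have hapq : a p q = 1 := by simp [hadef, if_neg hpq, hQ'pq]
  have haqp : a q p = 1 := by simp [hadef, if_neg (Ne.symm hpq), hQ'qp]
  set s : ℝ := ∑ i, w i with hsdef
  set N : ι → ℝ := fun i => ∑ j, a i j * w j with hNdef
  have hN0 : ∀ i, 0 ≤ N i := fun i =>
    Finset.sum_nonneg fun j _ => mul_nonneg (ha0 i j) (hw0 j)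
  set T : ℝ := ∑ i, N i with hTdef
  have hT0 : 0 ≤ T := Finset.sum_nonneg fun i _ => hN0 i
  -- eigen equation in terms of a
  have heq : ∀ i, (lam + 1) * w i = s - 2 * N i := by
    intro i
    have h1 : ∑ j, Q' i j * w j
        = (∑ j, ((if i = j then (0:ℝ) else 1) * w j)) - 2 * N i := by
      have hNi : N i = ∑ j, a i j * w j := rfl
      rw [hNi, Finset.mul_sum, ← Finset.sum_sub_distrib]
      refine Finset.sum_congr rfl fun j _ => ?_
      rw [hQ'a i j]; ring
    have h2 : ∑ j, ((if i = j then (0:ℝ) else 1) * w j) = s - w i := by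
      have : ∀ j, ((if i = j then (0:ℝ) else 1) * w j) = w j - (if i = j then w j else 0) := by
        intro j; by_cases h : i = j <;> simp [h]
      rw [Finset.sum_congr rfl fun j _ => this j, Finset.sum_sub_distrib,
        Finset.sum_ite_eq Finset.univ i w]
      simp [hsdef]
    have h3 := heig' i
    rw [h1, h2] at h3
    linarith
  -- sum of eigen equations
  have hTs : 2 * T = (m - 1 - lam) * s := by
    have h1 : ∑ i, ((lam + 1) * w i) = ∑ i, (s - 2 * N i) := by
      exact Finset.sum_congr rfl fun i _ => heq i
    rw [← Finset.mul_sum, Finset.sum_sub_distrib, ← Finset.mul_sum, ← hTdef,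
      Finset.sum_const, Finset.card_univ, ← hsdef, nsmul_eq_mul, ← hmdef] at h1
    linarith
  -- positivity of s
  have hspos : 0 < s := by
    obtain ⟨i0, hi0⟩ := Function.ne_iff.mp hv
    have hwpos : 0 < w i0 := by
      rcases lt_trichotomy (v i0) 0 with h | h | h
      · simp only [hwdef, hεdef, if_pos h]; nlinarith
      · exact absurd h hi0
      · simp only [hwdef, hεdef, if_neg (not_lt.mpr h.le)]; nlinarith
    have := Finset.single_le_sum (f := w) (fun i _ => hw0 i) (Finset.mem_univ i0)
    rw [← hsdef] at this
    linarith
  -- key inequalities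
  have hNT : N p + N q ≤ T := by
    have h1 : ∑ i ∈ ({p, q} : Finset ι), N i ≤ T := by
      rw [hTdef]
      exact Finset.sum_le_sum_of_subset_of_nonneg (Finset.subset_univ _)
        (fun i _ _ => hN0 i)
    rwa [Finset.sum_pair hpq] at h1
  have hwN : w p + w q ≤ N p + N q := by
    have h1 : a p q * w q ≤ N p := by
      rw [hNdef]
      exact Finset.single_le_sum (f := fun j => a p j * w j)
        (fun j _ => mul_nonneg (ha0 p j) (hw0 j)) (Finset.mem_univ q)
    have h2 : a q p * w p ≤ N q := by
      rw [hNdef]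
      exact Finset.single_le_sum (f := fun j => a q j * w j)
        (fun j _ => mul_nonneg (ha0 q j) (hw0 j)) (Finset.mem_univ p)
    rw [hapq] at h1; rw [haqp] at h2
    linarith
  have hkey : (lam + 1) * (w p + w q) = 2 * s - 2 * (N p + N q) := by
    have := heq p; have := heq q; linarith [heq p, heq q]
  -- chain
  have hchain : 4 * s ≤ (lam + 3) * ((m - 1 - lam) * s) := by
    have h1 : 2 * s - 2 * T ≤ (lam + 1) * (w p + w q) := by
      rw [hkey]; linarith
    have h2 : (lam + 1) * (w p + w q) ≤ (lam + 1) * T := by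
      apply mul_le_mul_of_nonneg_left _ (by linarith)
      linarith
    have h3 : 2 * s ≤ (lam + 3) * T := by nlinarith
    nlinarith [hTs]
  have h4 : (4:ℝ) ≤ (lam + 3) * (m - 1 - lam) := by
    have := hchain
    nlinarith [hspos]
  -- conclude via BB
  obtain ⟨hB1, hB2, hB3⟩ := BB_facts hm3
  by_contra hcon
  push_neg at hcon
  have hprod : 0 < (lam - BB m) * (lam + BB m - (m-4)) :=
    mul_pos (by linarith) (by linarith)
  nlinarith [hprod, hB2, h4]

/-- The signature matrix restricted to `S`. -/
def subQ {n : ℕ} (Q : Matrix (Fin n) (Fin n) ℝ) (S : Finset (Fin n)) :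
    Matrix ↥S ↥S ℝ :=
  Matrix.of fun i j => Q ↑i ↑j

lemma subQ_not_sign {n k : ℕ} (F : TwoUniformFrame n k) (S : Finset (Fin n))
    (hnbip : ¬ IsCompleteBipartite ((frameGraph F).induce (S : Set (Fin n)))) :
    ¬ ∃ ε : ↥S → ℝ, (∀ i, ε i = 1 ∨ ε i = -1) ∧
      ∀ i j, i ≠ j → subQ F.Q S i j = ε i * ε j := by
  rintro ⟨ε, hpm, hQeq⟩
  apply hnbip
  refine ⟨{i : ↥(S : Set (Fin n)) | ε ⟨↑i, i.2⟩ = -1}, ?_⟩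
  intro i j
  by_cases hij : (↑i : Fin n) = ↑j
  · have hijeq : i = j := Subtype.ext hij
    subst hijeq
    constructor
    · intro hadj; exact absurd hadj (SimpleGraph.irrefl _)
    · intro h; exact absurd h (by tauto)
  · have hij' : (⟨↑i, i.2⟩ : ↥S) ≠ ⟨↑j, j.2⟩ := fun hc => hij (congrArg Subtype.val hc)
    have hQ := hQeq _ _ hij'
    simp only [subQ, Matrix.of_apply] at hQ
    have hadj_iff : ((frameGraph F).induce (S : Set (Fin n))).Adj i j
        ↔ F.Q ↑i ↑j = -1 := by
      constructor
      · intro h; exact (h : (↑i : Fin n) ≠ ↑j ∧ F.Q ↑i ↑j = -1).2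
      · intro h; exact (⟨hij, h⟩ : (↑i : Fin n) ≠ ↑j ∧ F.Q ↑i ↑j = -1)
    simp only [Set.mem_setOf_eq]
    rw [hadj_iff, hQ]
    rcases hpm ⟨↑i, i.2⟩ with h1 | h1 <;> rcases hpm ⟨↑j, j.2⟩ with h2 | h2 <;>
      rw [h1, h2] <;> norm_num

lemma quadform_transfer {n : ℕ} (Q : Matrix (Fin n) (Fin n) ℝ) (S : Finset (Fin n))
    (B : ℝ) (hq : ∀ u : ↥S → ℝ, u ⬝ᵥ ((subQ Q S) *ᵥ u) ≤ B * (u ⬝ᵥ u))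
    (z : Fin n → ℝ) (hz : ∀ i, i ∉ S → z i = 0) :
    z ⬝ᵥ (Q *ᵥ z) ≤ B * (z ⬝ᵥ z) := by
  set u : ↥S → ℝ := fun i => z ↑i with hudef
  have hrestrict : ∀ f : Fin n → ℝ, (∀ i, i ∉ S → f i = 0) →
      ∀ g : Fin n → ℝ, g ⬝ᵥ f = ∑ i : ↥S, g ↑i * f ↑i := by
    intro f hf g
    rw [dotProduct, Finset.sum_coe_sort S (fun i => g i * f i)]
    symm
    apply Finset.sum_subset (Finset.subset_univ S)
    intro x _ hx
    rw [hf x hx, mul_zero]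
  have h1 : z ⬝ᵥ z = u ⬝ᵥ u := by
    rw [hrestrict z hz z]; rfl
  have h2 : z ⬝ᵥ (Q *ᵥ z) = u ⬝ᵥ ((subQ Q S) *ᵥ u) := by
    have hzd : ∀ i : ↥S, (Q *ᵥ z) ↑i = ((subQ Q S) *ᵥ u) i := by
      intro i
      show (Q ↑i) ⬝ᵥ z = _
      rw [hrestrict z hz (Q ↑i)]
      rfl
    have : z ⬝ᵥ (Q *ᵥ z) = ∑ i : ↥S, z ↑i * (Q *ᵥ z) ↑i := by
      -- z ⬝ᵥ w = ∑ z i * w i restricted to S since z vanishes outside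
      rw [dotProduct, Finset.sum_coe_sort S (fun i => z i * (Q *ᵥ z) i)]
      symm
      apply Finset.sum_subset (Finset.subset_univ S)
      intro x _ hx
      rw [hz x hx, zero_mul]
    rw [this]
    refine Finset.sum_congr rfl fun i _ => ?_
    rw [hzd i]
  rw [h1, h2]
  exact hq u

lemma upper_bound_S {n k m : ℕ} (hm : 3 ≤ m) (F : TwoUniformFrame n k)
    (S : Finset (Fin n)) (hS : S.card = m)
    (hnbip : ¬ IsCompleteBipartite ((frameGraph F).induce (S : Set (Fin n)))) :
    opNorm (F.Vᵀ * diagS S * F.V) ≤ (k : ℝ) / n + c n k * BB m := by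
  have hm3 : (3:ℝ) ≤ (m:ℝ) := by exact_mod_cast hm
  obtain ⟨hB1, hB2, hB3⟩ := BB_facts hm3
  have hc0 : 0 ≤ c n k := Real.sqrt_nonneg _
  have hkn0 : 0 ≤ (k:ℝ)/n := by positivity
  have hμ0 : 0 ≤ (k : ℝ) / n + c n k * BB m := by nlinarith
  -- quadratic-form bound for subQ
  have hcard : Fintype.card ↥S = m := by rw [Fintype.card_coe]; exact hS
  have hsub_sym : (subQ F.Q S)ᵀ = subQ F.Q S := by
    ext i j
    simp only [Matrix.transpose_apply, subQ, Matrix.of_apply]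
    have := congrFun (congrFun F.symm ↑i) ↑j
    simpa [Matrix.transpose_apply] using this
  have hsub_diag : ∀ i : ↥S, subQ F.Q S i i = 0 := fun i => F.diag ↑i
  have hsub_off : ∀ i j : ↥S, i ≠ j → subQ F.Q S i j = 1 ∨ subQ F.Q S i j = -1 := by
    intro i j hij
    exact F.offdiag ↑i ↑j (fun hc => hij (Subtype.ext hc))
  have hq : ∀ u : ↥S → ℝ, u ⬝ᵥ ((subQ F.Q S) *ᵥ u) ≤ BB m * (u ⬝ᵥ u) := by
    apply quadform_le _ hsub_sym _ (by linarith)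
    intro lam v hlam hv heig
    have := eigen_le (subQ F.Q S) hsub_sym hsub_diag hsub_off
      (by rw [hcard]; exact hm) (subQ_not_sign F S hnbip) lam hlam v hv heig
    rwa [hcard] at this
  -- operator-norm bound
  apply opNorm_le_of _ _ hμ0
  intro x
  set y : Fin n → ℝ := F.V *ᵥ x with hydef
  set z : Fin n → ℝ := diagS S *ᵥ y with hzdef
  have hzv : ∀ i, z i = if i ∈ S then y i else 0 := by
    intro i
    rw [hzdef]
    show (Matrix.diagonal _ *ᵥ y) i = _
    rw [Matrix.mulVec_diagonal]
    by_cases h : i ∈ S <;> simp [h]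
  have hz0 : ∀ i, i ∉ S → z i = 0 := by intro i h; rw [hzv i, if_neg h]
  have hMx : (F.Vᵀ * diagS S * F.V) *ᵥ x = F.Vᵀ *ᵥ z := by
    rw [hzdef, hydef, Matrix.mulVec_mulVec, Matrix.mulVec_mulVec]
  have hdot1 : (F.Vᵀ *ᵥ z) ⬝ᵥ (F.Vᵀ *ᵥ z) = z ⬝ᵥ ((F.V * F.Vᵀ) *ᵥ z) := by
    rw [Matrix.mulVec_transpose, ← Matrix.dotProduct_mulVec, ← Matrix.mulVec_transpose,
      Matrix.mulVec_mulVec]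
  have hgram : z ⬝ᵥ ((F.V * F.Vᵀ) *ᵥ z)
      ≤ ((k : ℝ) / n + c n k * BB m) * (z ⬝ᵥ z) := by
    rw [F.gram, Matrix.add_mulVec, Matrix.smul_mulVec, Matrix.smul_mulVec,
      Matrix.one_mulVec, dotProduct_add]
    have e1 : z ⬝ᵥ (((k:ℝ)/n) • z) = ((k:ℝ)/n) * (z ⬝ᵥ z) := by
      rw [dotProduct_smul]; simp
    have e2 : z ⬝ᵥ (c n k • (F.Q *ᵥ z)) = c n k * (z ⬝ᵥ (F.Q *ᵥ z)) := by
      rw [dotProduct_smul]; simp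
    rw [e1, e2]
    have hqz : z ⬝ᵥ (F.Q *ᵥ z) ≤ BB m * (z ⬝ᵥ z) :=
      quadform_transfer F.Q S (BB m) hq z hz0
    have hzz : 0 ≤ z ⬝ᵥ z := Finset.sum_nonneg fun i _ => mul_self_nonneg (z i)
    nlinarith
  have haux : ∀ (xx : Fin k → ℝ) (zz : Fin n → ℝ),
      xx ⬝ᵥ (F.Vᵀ *ᵥ zz) = (F.V *ᵥ xx) ⬝ᵥ zz := by
    intro xx zz; rw [Matrix.dotProduct_mulVec, Matrix.vecMul_transpose]
  have hdot2 : z ⬝ᵥ z = x ⬝ᵥ ((F.Vᵀ * diagS S * F.V) *ᵥ x) := by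
    rw [hMx, haux x z, ← hydef]
    refine Finset.sum_congr rfl fun i _ => ?_
    rw [hzv i]
    by_cases h : i ∈ S <;> simp [h]
  calc ((F.Vᵀ * diagS S * F.V) *ᵥ x) ⬝ᵥ ((F.Vᵀ * diagS S * F.V) *ᵥ x)
      = (F.Vᵀ *ᵥ z) ⬝ᵥ (F.Vᵀ *ᵥ z) := by rw [hMx]
    _ = z ⬝ᵥ ((F.V * F.Vᵀ) *ᵥ z) := hdot1
    _ ≤ ((k : ℝ) / n + c n k * BB m) * (z ⬝ᵥ z) := hgram
    _ = ((k : ℝ) / n + c n k * BB m) * (x ⬝ᵥ ((F.Vᵀ * diagS S * F.V) *ᵥ x)) := by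
        rw [hdot2]

lemma seidel_one_edge_eigen {α : Type*} [Fintype α] [DecidableEq α]
    (H : SimpleGraph α) (p q : α) (hpq : p ≠ q)
    (hadj : ∀ i j, H.Adj i j ↔ s(i,j) = s(p,q)) (m B : ℝ)
    (hm : m = Fintype.card α) (hB2 : B^2 = (m-4)*B + 3*m - 7) :
    seidel H *ᵥ (fun i => if i = p ∨ i = q then B+1 else B+3)
      = B • (fun i => if i = p ∨ i = q then B+1 else B+3) := by
  set w : α → ℝ := fun i => if i = p ∨ i = q then B+1 else B+3 with hwdef
  have hwp : w p = B+1 := by simp [hwdef]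
  have hwq : w q = B+1 := by simp [hwdef]
  have hsum : ∑ j, w j = m*(B+3) - 4 := by
    have h1 : ∀ j, w j = (B+3) - (if j ∈ ({p, q} : Finset α) then 2 else 0) := by
      intro j
      by_cases h : j = p ∨ j = q
      · have hmem : j ∈ ({p, q} : Finset α) := by
          rcases h with h | h <;> simp [h]
        rw [if_pos hmem, hwdef]; simp only [if_pos h]; ring
      · have hmem : j ∉ ({p, q} : Finset α) := by
          simp only [Finset.mem_insert, Finset.mem_singleton]; exact h
        rw [if_neg hmem, hwdef]; simp only [if_neg h]; ring
    rw [Finset.sum_congr rfl fun j _ => h1 j, Finset.sum_sub_distrib, Finset.sum_const,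
      Finset.card_univ, Finset.sum_ite_mem, Finset.univ_inter, Finset.sum_const,
      Finset.card_pair hpq, hm]
    push_cast
    ring
  funext i
  have hrow : ∀ j, seidel H i j * w j
      = w j - (if j = i then w j else 0)
        - 2 * (if (i ≠ j ∧ s(i,j) = s(p,q)) then w j else 0) := by
    intro j
    by_cases hij : i = j
    · subst hij
      simp [seidel]
    · have h1 : seidel H i j = if s(i,j) = s(p,q) then -1 else 1 := by
        simp only [seidel, Matrix.of_apply, if_neg hij, hadj i j]
      have hji : ¬ j = i := fun hc => hij hc.symm
      by_cases h2 : s(i,j) = s(p,q)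
      · rw [h1, if_pos h2, if_neg hji, if_pos ⟨hij, h2⟩]; ring
      · rw [h1, if_neg h2, if_neg hji,
          if_neg (show ¬(i ≠ j ∧ s(i,j) = s(p,q)) from fun hc => h2 hc.2)]
        ring
  have hmv : (seidel H *ᵥ w) i
      = (∑ j, w j) - w i - 2 * (∑ j, if (i ≠ j ∧ s(i,j) = s(p,q)) then w j else 0) := by
    show ∑ j, seidel H i j * w j = _
    rw [Finset.sum_congr rfl fun j _ => hrow j]
    rw [Finset.sum_sub_distrib, Finset.sum_sub_distrib, Finset.sum_ite_eq' Finset.univ i w,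
      if_pos (Finset.mem_univ i), ← Finset.mul_sum]
  show (seidel H *ᵥ w) i = B * w i
  rw [hmv, hsum]
  by_cases hip : i = p
  · rw [hip]
    have hsel : ∀ j, (if (p ≠ j ∧ s(p,j) = s(p,q)) then w j else 0)
        = (if j = q then w j else 0) := by
      intro j
      by_cases hjq : j = q
      · subst hjq; rw [if_pos ⟨hpq, rfl⟩, if_pos rfl]
      · rw [if_neg, if_neg hjq]
        rintro ⟨hne, hs⟩
        exact hjq (Sym2.congr_right.mp hs)
    rw [Finset.sum_congr rfl fun j _ => hsel j, Finset.sum_ite_eq' Finset.univ q w,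
      if_pos (Finset.mem_univ q), hwp, hwq]
    linear_combination -hB2
  · by_cases hiq : i = q
    · rw [hiq]
      have hsel : ∀ j, (if (q ≠ j ∧ s(q,j) = s(p,q)) then w j else 0)
          = (if j = p then w j else 0) := by
        intro j
        by_cases hjp : j = p
        · subst hjp
          rw [if_pos ⟨fun hc => hpq hc.symm, Sym2.eq_swap⟩, if_pos rfl]
        · rw [if_neg, if_neg hjp]
          rintro ⟨hne, hs⟩
          rw [Sym2.eq_swap (a := p) (b := q)] at hs
          exact hjp (Sym2.congr_right.mp hs)
      rw [Finset.sum_congr rfl fun j _ => hsel j, Finset.sum_ite_eq' Finset.univ p w,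
        if_pos (Finset.mem_univ p), hwp, hwq]
      linear_combination -hB2
    · have hsel : ∀ j, (if (i ≠ j ∧ s(i,j) = s(p,q)) then w j else 0) = 0 := by
        intro j
        rw [if_neg]
        rintro ⟨hne, hs⟩
        rcases Sym2.eq_iff.mp hs with ⟨h1, h2⟩ | ⟨h1, h2⟩
        · exact hip h1
        · exact hiq h1
      rw [Finset.sum_congr rfl fun j _ => hsel j, Finset.sum_const_zero]
      have hwi : w i = B+3 := by
        rw [hwdef]; simp only [if_neg (not_or.mpr ⟨hip, hiq⟩)]
      rw [hwi]
      linear_combination -hB2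

lemma sum_eq_sum_subtype {γ : Type*} [Fintype γ] (S : Finset γ) (f : γ → ℝ)
    (hf : ∀ x, x ∉ S → f x = 0) :
    ∑ x, f x = ∑ i : ↥(S : Set γ), f ↑i := by
  have h1 : ∑ a ∈ S, f a = ∑ i : ↥(S : Set γ), f ↑i :=
    Finset.sum_subtype S (by simp) f
  rw [← h1]
  symm
  apply Finset.sum_subset (Finset.subset_univ S)
  intro x _ hx
  exact hf x hx

lemma dot_transpose {n k : ℕ} (A : Matrix (Fin n) (Fin k) ℝ) (z : Fin n → ℝ) :
    (Aᵀ *ᵥ z) ⬝ᵥ (Aᵀ *ᵥ z) = z ⬝ᵥ ((A * Aᵀ) *ᵥ z) := by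
  rw [Matrix.mulVec_transpose, ← Matrix.dotProduct_mulVec, ← Matrix.mulVec_transpose,
    Matrix.mulVec_mulVec]

lemma lower_bound_S {n k m : ℕ} (hm : 3 ≤ m) (F : TwoUniformFrame n k)
    (S : Finset (Fin n)) (hS : S.card = m)
    (hmin : MinSwitchEdges ((frameGraph F).induce (S : Set (Fin n))) 1) :
    (k : ℝ) / n + c n k * BB m ≤ opNorm (F.Vᵀ * diagS S * F.V) := by
  have hm3 : (3:ℝ) ≤ (m:ℝ) := by exact_mod_cast hm
  obtain ⟨hB1, hB2, hB3⟩ := BB_facts (m := (m:ℝ)) hm3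
  have hc0 : 0 ≤ c n k := Real.sqrt_nonneg _
  have hkn0 : 0 ≤ (k:ℝ)/n := by positivity
  set μ : ℝ := (k : ℝ) / n + c n k * BB m with hμdef
  have hμ0 : 0 ≤ μ := by
    have := mul_nonneg hc0 (show (0:ℝ) ≤ BB (m:ℝ) by linarith)
    rw [hμdef]; linarith
  rcases eq_or_lt_of_le hμ0 with hμeq | hμpos
  · rw [← hμeq]; exact norm_nonneg _
  obtain ⟨H, hsw, hcard1⟩ := hmin.1
  obtain ⟨e, he⟩ := Set.ncard_eq_one.mp hcard1
  revert he
  induction e using Sym2.ind with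
  | _ p q =>
  intro he
  have hadjpq : H.Adj p q := by
    rw [← SimpleGraph.mem_edgeSet, he]; exact Set.mem_singleton _
  have hpq : p ≠ q := H.ne_of_adj hadjpq
  have hadj_iff : ∀ i j, H.Adj i j ↔ s(i,j) = s(p,q) := by
    intro i j
    rw [← SimpleGraph.mem_edgeSet, he, Set.mem_singleton_iff]
  have hcardm : (m:ℝ) = Fintype.card ↥(S : Set (Fin n)) := by
    have h1 : Fintype.card ↥(S : Set (Fin n)) = Fintype.card ↥S :=
      Fintype.card_congr (Equiv.refl _)
    rw [h1, Fintype.card_coe, hS]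
  have hweig := seidel_one_edge_eigen H p q hpq hadj_iff (m:ℝ) (BB m) hcardm hB2
  set w : ↥(S : Set (Fin n)) → ℝ :=
    fun i => if i = p ∨ i = q then BB m + 1 else BB m + 3 with hwdef
  obtain ⟨σ, ε, hεpm, hrel⟩ := hsw
  have hε2 : ∀ i, ε i * ε i = 1 := by
    intro i; rcases hεpm i with h | h <;> rw [h] <;> norm_num
  set G' := (frameGraph F).induce (S : Set (Fin n)) with hG'def
  set u : ↥(S : Set (Fin n)) → ℝ := fun x => ε (σ.symm x) * w (σ.symm x) with hudef
  have hueig : ∀ x, ∑ y, seidel G' x y * u y = BB m * u x := by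
    intro x
    have hre : ∑ y, seidel G' x y * u y = ∑ j, seidel G' x (σ j) * u (σ j) :=
      (Equiv.sum_comp σ (fun y => seidel G' x y * u y)).symm
    rw [hre]
    have hterm : ∀ j, seidel G' x (σ j) * u (σ j)
        = ε (σ.symm x) * (seidel H (σ.symm x) j * w j) := by
      intro j
      have h1 := hrel (σ.symm x) j
      rw [Equiv.apply_symm_apply] at h1
      have h2 := hε2 (σ.symm x)
      have hu1 : u (σ j) = ε j * w j := by
        rw [hudef]; simp only [Equiv.symm_apply_apply]
      rw [hu1]
      linear_combination (-(ε (σ.symm x) * w j)) * h1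
        + (-(seidel G' x (σ j) * ε j * w j)) * h2
    rw [Finset.sum_congr rfl fun j _ => hterm j, ← Finset.mul_sum]
    have h4 : ∑ j, seidel H (σ.symm x) j * w j = BB m * w (σ.symm x) := by
      have := congrFun hweig (σ.symm x)
      simpa [Matrix.mulVec, dotProduct] using this
    rw [h4, hudef]
    ring
  have hQs : ∀ (i j : ↥(S : Set (Fin n))), F.Q ↑i ↑j = seidel G' i j := by
    intro i j
    by_cases hij : i = j
    · subst hij
      rw [F.diag ↑i]
      simp [seidel]
    · have hcne : (↑i : Fin n) ≠ ↑j := fun hc => hij (Subtype.ext hc)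
      have hne : seidel G' i j = if G'.Adj i j then -1 else 1 := by
        simp only [seidel, Matrix.of_apply, if_neg hij]; exact if_congr Iff.rfl rfl rfl
      rcases F.offdiag ↑i ↑j hcne with h | h
      · rw [hne, if_neg, h]
        intro hadj
        have : F.Q ↑i ↑j = -1 := (hadj : (↑i : Fin n) ≠ ↑j ∧ F.Q ↑i ↑j = -1).2
        rw [h] at this; norm_num at this
      · rw [hne, if_pos (show G'.Adj i j from (⟨hcne, h⟩ : (↑i : Fin n) ≠ ↑j ∧ F.Q ↑i ↑j = -1)), h]
  set ut : Fin n → ℝ := fun x => if h : x ∈ S then u ⟨x, h⟩ else 0 with hutdef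
  have hut0 : ∀ x, x ∉ S → ut x = 0 := by
    intro x hx; rw [hutdef]; exact dif_neg hx
  have hutc : ∀ i : ↥(S : Set (Fin n)), ut ↑i = u i := by
    intro i
    show (if h : (↑i : Fin n) ∈ S then u ⟨↑i, h⟩ else 0) = u i
    rw [dif_pos (show (↑i : Fin n) ∈ S from i.2)]
  have hQut : ∀ x, x ∈ S → (F.Q *ᵥ ut) x = BB m * ut x := by
    intro x hx
    have hxS : x ∈ (S : Set (Fin n)) := hx
    have h1 : (F.Q *ᵥ ut) x = ∑ y, F.Q x y * ut y := rfl
    rw [h1, sum_eq_sum_subtype S (fun y => F.Q x y * ut y)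
      (fun y hy => by simp only [hut0 y hy, mul_zero])]
    have h2 : ∀ i : ↥(S : Set (Fin n)), F.Q x ↑i * ut ↑i
        = seidel G' ⟨x, hxS⟩ i * u i := by
      intro i
      rw [hutc i, show F.Q x ↑i = F.Q ↑(⟨x, hxS⟩ : ↥(S : Set (Fin n))) ↑i from rfl,
        hQs ⟨x, hxS⟩ i]
    rw [Finset.sum_congr rfl fun i _ => h2 i, hueig ⟨x, hxS⟩, hutc ⟨x, hxS⟩]
  have hDut : diagS S *ᵥ ut = ut := by
    funext x
    show (Matrix.diagonal _ *ᵥ ut) x = ut x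
    rw [Matrix.mulVec_diagonal]
    by_cases h : x ∈ S
    · rw [if_pos h, one_mul]
    · rw [if_neg h, zero_mul, hut0 x h]
  have hDQut : diagS S *ᵥ (F.Q *ᵥ ut) = BB m • ut := by
    funext x
    show (Matrix.diagonal _ *ᵥ (F.Q *ᵥ ut)) x = _
    rw [Matrix.mulVec_diagonal]
    by_cases h : x ∈ S
    · rw [if_pos h, one_mul, hQut x h]; rfl
    · rw [if_neg h, zero_mul]
      show (0:ℝ) = BB m * ut x
      rw [hut0 x h, mul_zero]
  have hPut : diagS S *ᵥ ((F.V * F.Vᵀ) *ᵥ ut) = μ • ut := by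
    have h1 : (F.V * F.Vᵀ) *ᵥ ut = (((k:ℝ)/n) • ut) + (c n k • (F.Q *ᵥ ut)) := by
      rw [F.gram, Matrix.add_mulVec, Matrix.smul_mulVec, Matrix.smul_mulVec,
        Matrix.one_mulVec]
    rw [h1, Matrix.mulVec_add, Matrix.mulVec_smul, Matrix.mulVec_smul, hDut, hDQut]
    funext x
    show (k:ℝ)/n * ut x + c n k * (BB m * ut x) = μ * ut x
    rw [hμdef]; ring
  set xv : Fin k → ℝ := F.Vᵀ *ᵥ ut with hxvdef
  have hMxv : (F.Vᵀ * diagS S * F.V) *ᵥ xv = μ • xv := by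
    rw [hxvdef, Matrix.mulVec_mulVec]
    have hassoc : F.Vᵀ * diagS S * F.V * F.Vᵀ = F.Vᵀ * (diagS S * (F.V * F.Vᵀ)) := by
      rw [Matrix.mul_assoc (F.Vᵀ * diagS S) (F.V) (F.Vᵀ),
        Matrix.mul_assoc (F.Vᵀ) (diagS S) (F.V * F.Vᵀ)]
    rw [hassoc, ← Matrix.mulVec_mulVec, ← Matrix.mulVec_mulVec, hPut, Matrix.mulVec_smul]
  have hutdot : 0 < ut ⬝ᵥ ut := by
    set x0 : ↥(S : Set (Fin n)) := σ p with hx0def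
    have h1 : ut ↑x0 = ε p * w p := by
      rw [hutc x0, hudef, hx0def]
      simp only [Equiv.symm_apply_apply]
    have hwp : w p = BB m + 1 := by rw [hwdef]; simp
    have h2 : ut ↑x0 ≠ 0 := by
      rw [h1, hwp]
      rcases hεpm p with h | h <;> rw [h] <;> nlinarith
    have h3 : 0 < ut ↑x0 * ut ↑x0 := mul_self_pos.mpr h2
    have h4 : ut ↑x0 * ut ↑x0 ≤ ut ⬝ᵥ ut :=
      Finset.single_le_sum (f := fun i => ut i * ut i)
        (fun i _ => mul_self_nonneg (ut i)) (Finset.mem_univ (↑x0 : Fin n))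
    linarith
  have hdd : xv ⬝ᵥ xv = μ * (ut ⬝ᵥ ut) := by
    rw [hxvdef, dot_transpose]
    have h1 : ∀ y : Fin n → ℝ, ut ⬝ᵥ (diagS S *ᵥ y) = ut ⬝ᵥ y := by
      intro y
      refine Finset.sum_congr rfl fun i _ => ?_
      show ut i * (Matrix.diagonal _ *ᵥ y) i = ut i * y i
      rw [Matrix.mulVec_diagonal]
      by_cases h : i ∈ S
      · rw [if_pos h, one_mul]
      · rw [if_neg h, zero_mul, hut0 i h, zero_mul, zero_mul]
    rw [← h1 ((F.V * F.Vᵀ) *ᵥ ut), hPut]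
    rw [dotProduct_smul]
    rfl
  have hxv0 : xv ≠ 0 := by
    intro hc
    rw [hc] at hdd
    have : (0 : Fin k → ℝ) ⬝ᵥ (0 : Fin k → ℝ) = 0 := zero_dotProduct 0
    rw [this] at hdd
    nlinarith
  exact le_opNorm_of_eigen _ μ hμ0 xv hxv0 hMxv


theorem statement10 (n k m : ℕ) (hm : 3 ≤ m) (hmn : m ≤ n)
    (F : TwoUniformFrame n k)
    (hno : ¬ HasInducedCompleteBipartite (frameGraph F) m) :
    errInf F.V m ≤
      (k : ℝ) / n + c n k * ((m : ℝ) / 2 - 2 + Real.sqrt ((m : ℝ) ^ 2 / 4 + (m : ℝ) - 3)) ∧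
    ((∃ S : Finset (Fin n), S.card = m ∧
        MinSwitchEdges ((frameGraph F).induce (S : Set (Fin n))) 1) →
      errInf F.V m =
        (k : ℝ) / n + c n k * ((m : ℝ) / 2 - 2 + Real.sqrt ((m : ℝ) ^ 2 / 4 + (m : ℝ) - 3))) := by
  have hm3 : (3:ℝ) ≤ (m:ℝ) := by exact_mod_cast hm
  obtain ⟨hB1, hB2, hB3⟩ := BB_facts (m := (m:ℝ)) hm3
  have hc0 : 0 ≤ c n k := Real.sqrt_nonneg _
  have hkn0 : 0 ≤ (k:ℝ)/n := by positivity
  have hBBdef : (k : ℝ) / n + c n k * ((m : ℝ) / 2 - 2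
        + Real.sqrt ((m : ℝ) ^ 2 / 4 + (m : ℝ) - 3))
      = (k:ℝ)/n + c n k * BB (m:ℝ) := rfl
  have hμ0 : 0 ≤ (k:ℝ)/n + c n k * BB (m:ℝ) := by
    have := mul_nonneg hc0 (show (0:ℝ) ≤ BB (m:ℝ) by linarith)
    linarith
  have hub : ∀ x ∈ {x : ℝ | ∃ S : Finset (Fin n), S.card = m
        ∧ x = opNorm (F.Vᵀ * diagS S * F.V)},
      x ≤ (k:ℝ)/n + c n k * BB (m:ℝ) := by
    rintro x ⟨S, hScard, rfl⟩
    exact upper_bound_S hm F S hScard (fun hb => hno ⟨S, hScard, hb⟩)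
  have hpart1 : errInf F.V m ≤ (k:ℝ)/n + c n k * BB (m:ℝ) := by
    unfold errInf
    exact Real.sSup_le hub hμ0
  constructor
  · rw [hBBdef]; exact hpart1
  · rintro ⟨S, hScard, hminS⟩
    rw [hBBdef]
    refine le_antisymm hpart1 ?_
    have hlow := lower_bound_S hm F S hScard hminS
    have hmem : opNorm (F.Vᵀ * diagS S * F.V) ∈ {x : ℝ | ∃ S' : Finset (Fin n),
        S'.card = m ∧ x = opNorm (F.Vᵀ * diagS S' * F.V)} := ⟨S, hScard, rfl⟩
    have hbdd : BddAbove {x : ℝ | ∃ S' : Finset (Fin n),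
        S'.card = m ∧ x = opNorm (F.Vᵀ * diagS S' * F.V)} :=
      ⟨(k:ℝ)/n + c n k * BB (m:ℝ), fun x hx => hub x hx⟩
    refine le_trans hlow ?_
    unfold errInf
    exact le_csSup hbdd hmem


end FramesErasures
end
end
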